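/- arXiv:2603.29516 — 9 statements merged into one kernel-verified Lean document; each statement's English description precedes it below -/
import Mathlib

section
/- Let G be a simple graph on [n], m ≥ 2, and let {k,l} be a non-edge of G such that there exists a path k, k_1, …, k_s, l in G from k to l. Then for any indices i_1, …, i_s ∈ [m] and any 1 ≤ i < j ≤ m, the product x_{i_1,k_1} x_{i_2,k_2} ⋯ x_{i_s,k_s} · (x_{i,k}x_{j,l} − x_{i,l}x_{j,k}) lies in the generalized binomial edge ideal J_{K_m,G}. -/
open MvPolynomial

noncomputable def minor (K : Type*) [Field K] (i j k l : ℕ) : MvPolynomial (ℕ × ℕ) K :=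
  X (i, k) * X (j, l) - X (i, l) * X (j, k)

noncomputable def genBEI (K : Type*) [Field K] (m : ℕ) (G : SimpleGraph ℕ) :
    Ideal (MvPolynomial (ℕ × ℕ) K) :=
  Ideal.span {f | ∃ i j k l : ℕ, 1 ≤ i ∧ i < j ∧ j ≤ m ∧ k < l ∧ G.Adj k l ∧ f = minor K i j k l}

lemma minor_mem_edge (K : Type*) [Field K] (m : ℕ) (G : SimpleGraph ℕ)
    (a b k l : ℕ) (ha : 1 ≤ a) (ham : a ≤ m) (hb : 1 ≤ b) (hbm : b ≤ m)
    (hadj : G.Adj k l) : minor K a b k l ∈ genBEI K m G := by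
  have key : ∀ p q : ℕ, 1 ≤ p → p < q → q ≤ m → minor K p q k l ∈ genBEI K m G := by
    intro p q hp hpq hqm
    rcases lt_or_gt_of_ne hadj.ne with hkl | hkl
    · exact Ideal.subset_span ⟨p, q, k, l, hp, hpq, hqm, hkl, hadj, rfl⟩
    · have h : minor K p q k l = -(minor K p q l k) := by unfold minor; ring
      rw [h]
      exact neg_mem (Ideal.subset_span ⟨p, q, l, k, hp, hpq, hqm, hkl, hadj.symm, rfl⟩)
  rcases lt_trichotomy a b with hab | rfl | hab
  · exact key a b ha hab hbm
  · have h : minor K a a k l = 0 := by unfold minor; ring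
    rw [h]; exact zero_mem _
  · have h : minor K a b k l = -(minor K b a k l) := by unfold minor; ring
    rw [h]; exact neg_mem (key b a hb hab ham)

lemma aux_mem (K : Type*) [Field K] (m : ℕ) (G : SimpleGraph ℕ) :
    ∀ s : ℕ, ∀ (c iseq : ℕ → ℕ) (k l a b : ℕ),
      c 0 = k → c (s + 1) = l →
      (∀ t : ℕ, t ≤ s → G.Adj (c t) (c (t + 1))) →
      (∀ t : ℕ, 1 ≤ t → t ≤ s → iseq t ∈ Set.Icc 1 m) →
      1 ≤ a → a ≤ m → 1 ≤ b → b ≤ m →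
      (∏ t ∈ Finset.Icc 1 s, X (iseq t, c t)) * minor K a b k l ∈ genBEI K m G := by
  intro s
  induction s with
  | zero =>
    intro c iseq k l a b hc0 hcs hpath hiseq ha ham hb hbm
    have hadj : G.Adj k l := by
      have := hpath 0 le_rfl
      rwa [hc0, hcs] at this
    have : Finset.Icc 1 0 = (∅ : Finset ℕ) := by simp
    rw [this, Finset.prod_empty, one_mul]
    exact minor_mem_edge K m G a b k l ha ham hb hbm hadj
  | succ s ih =>
    intro c iseq k l a b hc0 hcs hpath hiseq ha ham hb hbm
    have hq : iseq 1 ∈ Set.Icc 1 m := hiseq 1 le_rfl (by omega)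
    have hadjk : G.Adj k (c 1) := by
      have := hpath 0 (Nat.zero_le _)
      rwa [hc0] at this
    have hpath' : ∀ t : ℕ, t ≤ s → G.Adj (c (t + 1)) (c (t + 1 + 1)) :=
      fun t ht => hpath (t + 1) (by omega)
    have hiseq' : ∀ t : ℕ, 1 ≤ t → t ≤ s → iseq (t + 1) ∈ Set.Icc 1 m :=
      fun t h1 h2 => hiseq (t + 1) (by omega) (by omega)
    have h1 := ih (fun t => c (t + 1)) (fun t => iseq (t + 1)) (c 1) l (iseq 1) b
      rfl hcs hpath' hiseq' hq.1 hq.2 hb hbm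
    have h2 := ih (fun t => c (t + 1)) (fun t => iseq (t + 1)) (c 1) l (iseq 1) a
      rfl hcs hpath' hiseq' hq.1 hq.2 ha ham
    have h3 : minor K a b k (c 1) ∈ genBEI K m G :=
      minor_mem_edge K m G a b k (c 1) ha ham hb hbm hadjk
    set P' : MvPolynomial (ℕ × ℕ) K := ∏ t ∈ Finset.Icc 1 s, X (iseq (t + 1), c (t + 1))
      with hP'
    have hins : Finset.Icc 1 (s + 1) = insert 1 (Finset.Icc 2 (s + 1)) := by
      ext x; simp; omega
    have h1notin : (1 : ℕ) ∉ Finset.Icc 2 (s + 1) := by simp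
    have hre : (∏ t ∈ Finset.Icc 2 (s + 1), X (iseq t, c t) : MvPolynomial (ℕ × ℕ) K)
        = P' := by
      rw [hP']
      have : Finset.Icc 2 (s + 1)
          = Finset.map (addRightEmbedding 1) (Finset.Icc 1 s) := by
        rw [Finset.map_add_right_Icc]
      rw [this, Finset.prod_map]
      rfl
    have key : (∏ t ∈ Finset.Icc 1 (s + 1), X (iseq t, c t)) * minor K a b k l
        = X ((a : ℕ), k) * (P' * minor K (iseq 1) b (c 1) l)
          - X ((b : ℕ), k) * (P' * minor K (iseq 1) a (c 1) l)
          + X ((iseq 1 : ℕ), l) * (P' * minor K a b k (c 1)) := by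
      rw [hins, Finset.prod_insert h1notin, hre]
      unfold minor
      ring
    rw [key]
    exact add_mem (sub_mem (Ideal.mul_mem_left _ _ h1) (Ideal.mul_mem_left _ _ h2))
      (Ideal.mul_mem_left _ _ (Ideal.mul_mem_left _ _ h3))

/-- Corollary 3.2: if `{k,l}` is a non-edge of `G` joined by a path
`k, c 1, …, c s, l` in `G`, then for any row indices `i₁,…,i_s ∈ [m]` and any
`1 ≤ i < j ≤ m`, the product `x_{i₁,k₁} ⋯ x_{i_s,k_s} · (x_{i,k}x_{j,l} − x_{i,l}x_{j,k})`
lies in `J_{K_m,G}`. -/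
theorem prod_mul_minor_mem_genBEI
    (K : Type*) [Field K] (m n : ℕ) (hm : 2 ≤ m)
    (G : SimpleGraph ℕ)
    (hGrange : ∀ u v : ℕ, G.Adj u v → u ∈ Set.Icc 1 n ∧ v ∈ Set.Icc 1 n)
    (k l : ℕ) (hkl : k ≠ l) (hnonedge : ¬ G.Adj k l)
    (s : ℕ) (c : ℕ → ℕ) (hc0 : c 0 = k) (hcs : c (s + 1) = l)
    (hpath : ∀ t : ℕ, t ≤ s → G.Adj (c t) (c (t + 1)))
    (iseq : ℕ → ℕ) (hiseq : ∀ t : ℕ, 1 ≤ t → t ≤ s → iseq t ∈ Set.Icc 1 m)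
    (i j : ℕ) (hi : 1 ≤ i) (hij : i < j) (hjm : j ≤ m) :
    (∏ t ∈ Finset.Icc 1 s, X (iseq t, c t)) * minor K i j k l ∈ genBEI K m G := by
  exact aux_mem K m G s c iseq k l i j hc0 hcs hpath hiseq hi (by omega) (by omega) hjm
end

section
/- Let G be a simple graph on [n], m ≥ 2, i ∈ [m], j ∈ [n], and let p, q be two neighbors of the vertex j in G with p ≠ q. Then for any 1 ≤ k < l ≤ m, the polynomial x_{i,j}(x_{k,p}x_{l,q} − x_{k,q}x_{l,p}) belongs to J_{K_m,G}. Explicitly, x_{i,j}(x_{k,p}x_{l,q} − x_{k,q}x_{l,p}) = x_{k,p}(x_{i,j}x_{l,q} − x_{i,q}x_{l,j}) + x_{i,q}(x_{k,p}x_{l,j} − x_{k,j}x_{l,p}) + x_{l,p}(x_{i,q}x_{k,j} − x_{i,j}x_{k,q}). -/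
open MvPolynomial

lemma minor_mem_genBEI (K : Type*) [Field K] (m : ℕ) (G : SimpleGraph ℕ)
    (a b c d : ℕ) (h1 : 1 ≤ a) (h2 : a < b) (h3 : b ≤ m) (h4 : c < d) (h5 : G.Adj c d) :
    minor K a b c d ∈ genBEI K m G :=
  Ideal.subset_span ⟨a, b, c, d, h1, h2, h3, h4, h5, rfl⟩

lemma aux_mem_s2 (K : Type*) [Field K] (m : ℕ) (G : SimpleGraph ℕ)
    (a b c d : ℕ) (ha : 1 ≤ a) (hb : 1 ≤ b) (ham : a ≤ m) (hbm : b ≤ m)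
    (hcd : G.Adj c d) (e : ℕ × ℕ) :
    X e * (X (a, c) * X (b, d) - X (a, d) * X (b, c)) ∈ genBEI K m G := by
  rcases lt_trichotomy a b with hab | hab | hab
  · rcases lt_or_gt_of_ne hcd.ne with h | h
    · have := Ideal.mul_mem_left _ (X e) (minor_mem_genBEI K m G a b c d ha hab hbm h hcd)
      have heq : X e * (X (a, c) * X (b, d) - X (a, d) * X (b, c))
          = X e * minor K a b c d := by unfold minor; ring
      rwa [heq]
    · have := Ideal.mul_mem_left _ (X e) (minor_mem_genBEI K m G a b d c ha hab hbm h hcd.symm)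
      have heq : X e * (X (a, c) * X (b, d) - X (a, d) * X (b, c))
          = -(X e * minor K a b d c) := by unfold minor; ring
      rw [heq]; exact neg_mem this
  · subst hab
    have heq : (X e : MvPolynomial (ℕ × ℕ) K) * (X (a, c) * X (a, d) - X (a, d) * X (a, c)) = 0 := by ring
    rw [heq]; exact zero_mem _
  · rcases lt_or_gt_of_ne hcd.ne with h | h
    · have := Ideal.mul_mem_left _ (X e) (minor_mem_genBEI K m G b a c d hb hab ham h hcd)
      have heq : X e * (X (a, c) * X (b, d) - X (a, d) * X (b, c))
          = -(X e * minor K b a c d) := by unfold minor; ring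
      rw [heq]; exact neg_mem this
    · have := Ideal.mul_mem_left _ (X e) (minor_mem_genBEI K m G b a d c hb hab ham h hcd.symm)
      have heq : X e * (X (a, c) * X (b, d) - X (a, d) * X (b, c))
          = X e * minor K b a d c := by unfold minor; ring
      rwa [heq]

/-- If `p, q` are distinct neighbors of `j` in `G`, then for any `i ∈ [m]` and
`1 ≤ k < l ≤ m`, the polynomial `x_{i,j}(x_{k,p}x_{l,q} − x_{k,q}x_{l,p})` belongs to
`J_{K_m,G}`, and the explicit three-term identity holds. -/
theorem X_mul_minor_of_neighbors_mem_genBEI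
    (K : Type*) [Field K] (m n : ℕ) (hm : 2 ≤ m)
    (G : SimpleGraph ℕ)
    (hGrange : ∀ u v : ℕ, G.Adj u v → u ∈ Set.Icc 1 n ∧ v ∈ Set.Icc 1 n)
    (i j : ℕ) (hi : i ∈ Set.Icc 1 m) (hj : j ∈ Set.Icc 1 n)
    (p q : ℕ) (hp : G.Adj j p) (hq : G.Adj j q) (hpq : p ≠ q)
    (k l : ℕ) (hk : 1 ≤ k) (hkl : k < l) (hlm : l ≤ m) :
    X (i, j) * (X (k, p) * X (l, q) - X (k, q) * X (l, p)) ∈ genBEI K m G ∧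
    (X (i, j) : MvPolynomial (ℕ × ℕ) K) * (X (k, p) * X (l, q) - X (k, q) * X (l, p)) =
      X (k, p) * (X (i, j) * X (l, q) - X (i, q) * X (l, j)) +
      X (i, q) * (X (k, p) * X (l, j) - X (k, j) * X (l, p)) +
      X (l, p) * (X (i, q) * X (k, j) - X (i, j) * X (k, q)) := by
  obtain ⟨hi1, him⟩ := hi
  have hl1 : 1 ≤ l := hk.trans hkl.le
  have hkm : k ≤ m := hkl.le.trans hlm
  have hid : (X (i, j) : MvPolynomial (ℕ × ℕ) K) *
      (X (k, p) * X (l, q) - X (k, q) * X (l, p)) =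
      X (k, p) * (X (i, j) * X (l, q) - X (i, q) * X (l, j)) +
      X (i, q) * (X (k, p) * X (l, j) - X (k, j) * X (l, p)) +
      X (l, p) * (X (i, q) * X (k, j) - X (i, j) * X (k, q)) := by ring
  refine ⟨?_, hid⟩
  rw [hid]
  refine add_mem (add_mem ?_ ?_) ?_
  · exact aux_mem_s2 K m G i l j q hi1 hl1 him hlm hq (k, p)
  · exact aux_mem_s2 K m G k l p j hk hl1 hkm hlm hp.symm (i, q)
  · exact aux_mem_s2 K m G i k q j hi1 hk him hkm hq.symm (l, p)
end

section
/- Let G be a connected closed graph whose clique complex has facets F_i = [a_i, b_i] for i = 1, …, t with 1 = a_1 < a_2 < ⋯ < a_t and b_t = n. Define vertices by c_0 = 1, c_1 = b_1, and iteratively c_{i+1} = max{ max(F_k) : c_i ∈ F_k } whenever c_i ≠ n, terminating at c_{d+1} = n. Then the set {c_1, …, c_d} is a reduced connected dominating set of G of minimum cardinality; that is, d equals the reduced connected domination number γ_c*(G). -/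
/-- `G` (on the vertex labels `1,…,n`) is closed with respect to the given labeling:
for all `i < j < k`, if `{i,k}` is an edge then so are `{i,j}` and `{j,k}`. -/
def IsClosedGraph (G : SimpleGraph ℕ) : Prop :=
  ∀ i j k : ℕ, i < j → j < k → G.Adj i k → G.Adj i j ∧ G.Adj j k

/-- `D` is a reduced connected dominating set of `G` (with vertex set `[1,n]`):
`D ⊆ [1,n]`, the induced subgraph on `D` is connected (or `D = ∅`), and any two
vertices `u, v` outside `D` are joined by a walk all of whose internal vertices
lie in `D`. -/
def IsRCDS (n : ℕ) (G : SimpleGraph ℕ) (D : Set ℕ) : Prop :=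
  D ⊆ Set.Icc 1 n ∧
  (D = ∅ ∨ (G.induce D).Connected) ∧
  ∀ u ∈ Set.Icc 1 n \ D, ∀ v ∈ Set.Icc 1 n \ D,
    ∃ p : G.Walk u v, ∀ w ∈ p.support, w = u ∨ w = v ∨ w ∈ D

/-- Proposition 4.4: for a connected closed graph `G` on `[1,n]`, the greedy sequence
`c 0 = 1`, `c (i+1) = max {v : v = c i or v adjacent to c i}` (stopping when `c (d+1) = n`)
yields a reduced connected dominating set `{c 1, …, c d}` of minimum cardinality; in
particular `d` is the reduced connected domination number `γ_c*(G)`. -/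
theorem greedy_is_minimum_RCDS
    (n : ℕ) (hn : 1 ≤ n) (G : SimpleGraph ℕ)
    (hGrange : ∀ u v : ℕ, G.Adj u v → u ∈ Set.Icc 1 n ∧ v ∈ Set.Icc 1 n)
    (hclosed : IsClosedGraph G)
    (hconn : (G.induce (Set.Icc 1 n)).Connected)
    (c : ℕ → ℕ) (d : ℕ)
    (hc0 : c 0 = 1)
    (hgreedy : ∀ i : ℕ, i ≤ d → IsGreatest {v : ℕ | v = c i ∨ G.Adj (c i) v} (c (i + 1)))
    (hstop : c (d + 1) = n)
    (hne : ∀ i : ℕ, i ≤ d → c i ≠ n) :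
    IsRCDS n G (c '' Set.Icc 1 d) ∧
    (c '' Set.Icc 1 d).ncard = d ∧
    ∀ D : Set ℕ, IsRCDS n G D → d ≤ D.ncard := by
  classical
  -- ## Basic monotonicity of the greedy sequence
  have hmem : ∀ i, i ≤ d → c i ≤ c (i + 1) := fun i hi => (hgreedy i hi).2 (Or.inl rfl)
  have hstuck : ∀ j, j ≤ d → ∀ i, i ≤ j → c (i + 1) = c i → c (j + 1) = c i := by
    intro j
    induction j with
    | zero =>
      intro _ i hi heq
      interval_cases i
      exact heq
    | succ k ih =>
      intro hk i hi heq
      rcases Nat.lt_or_ge i (k + 1) with h | h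
      · have hik : i ≤ k := Nat.lt_succ_iff.mp h
        have hck : c (k + 1) = c i := ih (le_trans (Nat.le_succ k) hk) i hik heq
        have h1 := hgreedy (k + 1) hk
        rw [hck] at h1
        have h2 := hgreedy i (le_trans hik (le_trans (Nat.le_succ k) hk))
        rw [heq] at h2
        exact h1.unique h2
      · have hik : i = k + 1 := le_antisymm hi h
        subst hik
        exact heq
  have hlt : ∀ i, i ≤ d → c i < c (i + 1) := by
    intro i hi
    rcases lt_or_eq_of_le (hmem i hi) with h | h
    · exact h
    · exfalso
      have h2 := hstuck d le_rfl i hi h.symm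
      rw [hstop] at h2
      exact hne i hi h2.symm
  have hmono : ∀ i j, i ≤ j → j ≤ d + 1 → c i + (j - i) ≤ c j := by
    intro i j hij hj
    induction j with
    | zero => simp [Nat.le_zero.mp hij]
    | succ k ih =>
      rcases Nat.lt_or_ge i (k + 1) with h | h
      · have hik : i ≤ k := Nat.lt_succ_iff.mp h
        have h1 := ih hik (by omega)
        have h2 := hlt k (by omega)
        omega
      · have hik : i = k + 1 := le_antisymm hij h
        subst hik
        simp
  have hlt' : ∀ i j, i < j → j ≤ d + 1 → c i < c j := by
    intro i j hij hj
    have := hmono i j hij.le hj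
    omega
  have hub : ∀ i, i ≤ d + 1 → c i ≤ n := by
    intro i hi
    rcases eq_or_lt_of_le hi with h | h
    · subst h; omega
    · have := hlt' i (d + 1) h le_rfl
      omega
  have hlb : ∀ i, i ≤ d + 1 → i + 1 ≤ c i := by
    intro i hi
    have := hmono 0 i (Nat.zero_le i) hi
    omega
  have hnd : d + 2 ≤ n := by
    have := hlb (d + 1) le_rfl
    omega
  have hlenc : ∀ i, i ≤ d + 1 → c i + (d + 1) ≤ n + i := by
    intro i hi
    have := hmono i (d + 1) hi le_rfl
    omega
  have hadj : ∀ i, i ≤ d → G.Adj (c i) (c (i + 1)) := by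
    intro i hi
    rcases (hgreedy i hi).1 with h | h
    · exfalso; have := hlt i hi; omega
    · exact h
  have hrange1 : ∀ i, i ≤ d + 1 → 1 ≤ c i := by
    intro i hi
    have := hlb i hi
    omega
  -- ## Intervals spanned by edges are cliques
  have hclique : ∀ a b x y : ℕ, G.Adj a b → a ≤ x → x < y → y ≤ b → G.Adj x y := by
    intro a b x y hab hax hxy hyb
    have hxb : G.Adj x b := by
      rcases eq_or_lt_of_le hax with h | h
      · subst h; exact hab
      · exact (hclosed a x b h (lt_of_lt_of_le hxy hyb) hab).2
    rcases eq_or_lt_of_le hyb with h | h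
    · subst h; exact hxb
    · exact (hclosed x y b hxy h hxb).1
  -- ## Levels
  set lvl : ℕ → ℕ := fun x => sInf {i | x ≤ c i} with hlvl_def
  have hlvl_le : ∀ x i, x ≤ c i → lvl x ≤ i := fun x i h => Nat.sInf_le h
  have hlvl_spec : ∀ x, x ≤ n → x ≤ c (lvl x) := by
    intro x hx
    have hne' : {i | x ≤ c i}.Nonempty := ⟨d + 1, by simp only [Set.mem_setOf_eq, hstop]; exact hx⟩
    exact Nat.sInf_mem hne'
  have hlvl_top : ∀ x, x ≤ n → lvl x ≤ d + 1 := by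
    intro x hx
    exact hlvl_le x (d + 1) (by rw [hstop]; exact hx)
  have hlvl_not : ∀ x i, i < lvl x → c i < x := by
    intro x i h
    by_contra h'
    push_neg at h'
    have := hlvl_le x i h'
    omega
  have hlvl_mono : ∀ x y, x ≤ y → y ≤ n → lvl x ≤ lvl y := by
    intro x y hxy hy
    exact hlvl_le x _ (le_trans hxy (hlvl_spec y hy))
  have hlvl_lt_self : ∀ x, 1 ≤ x → x ≤ n → lvl x < x := by
    intro x h1 hx
    rcases le_or_gt x (d + 2) with h | h
    · have hx' : x ≤ c (x - 1) := by
        have := hlb (x - 1) (by omega)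
        omega
      have := hlvl_le x (x - 1) hx'
      omega
    · have := hlvl_top x hx
      omega
  have hlvl_lb : ∀ x, x ≤ n → d + 1 + x ≤ lvl x + n := by
    intro x hx
    have h1 := hlvl_spec x hx
    have h2 := hlvl_top x hx
    have := hlenc (lvl x) h2
    omega
  have hspeed : ∀ x y, G.Adj x y → lvl y ≤ lvl x + 1 := by
    intro x y hxy
    obtain ⟨hxr, hyr⟩ := hGrange x y hxy
    rcases le_or_gt (lvl x) d with h | h
    · have hx : x ≤ c (lvl x) := hlvl_spec x hxr.2
      rcases le_or_gt y (c (lvl x)) with hy | hy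
      · exact le_trans (hlvl_le y _ hy) (Nat.le_succ _)
      · have hyS : G.Adj (c (lvl x)) y := by
          rcases eq_or_lt_of_le hx with he | hl
          · rw [← he]; exact hxy
          · exact (hclosed x (c (lvl x)) y hl hy hxy).2
        exact hlvl_le y _ ((hgreedy (lvl x) h).2 (Or.inr hyS))
    · have := hlvl_top y hyr.2
      omega
  -- ## Along any walk every intermediate level is attained
  have hwalk : ∀ a b : ℕ, ∀ p : G.Walk a b, ∀ L : ℕ, lvl a < L → L ≤ lvl b →
      ∃ w ∈ p.support, lvl w = L := by
    intro a b p
    induction p with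
    | nil => intro L h1 h2; omega
    | @cons a a' b h q ih =>
      intro L h1 h2
      rcases le_or_gt L (lvl a') with hL | hL
      · have := hspeed a a' h
        refine ⟨a', ?_, by omega⟩
        rw [SimpleGraph.Walk.support_cons]
        exact List.mem_cons_of_mem _ q.start_mem_support
      · obtain ⟨w, hw, hwl⟩ := ih L hL h2
        refine ⟨w, ?_, hwl⟩
        rw [SimpleGraph.Walk.support_cons]
        exact List.mem_cons_of_mem _ hw
  -- ## Chain walks along the `c i`
  have hchain : ∀ j, j ≤ d + 1 → ∀ i, i ≤ j → ∃ p : G.Walk (c i) (c j),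
      ∀ w ∈ p.support, ∃ k, i ≤ k ∧ k ≤ j ∧ w = c k := by
    intro j
    induction j with
    | zero =>
      intro _ i hi
      have : i = 0 := by omega
      subst this
      refine ⟨SimpleGraph.Walk.nil, ?_⟩
      intro w hw
      rw [SimpleGraph.Walk.support_nil, List.mem_singleton] at hw
      exact ⟨0, le_rfl, le_rfl, hw⟩
    | succ j ih =>
      intro hj i hi
      rcases Nat.lt_or_ge i (j + 1) with h | h
      · obtain ⟨p, hp⟩ := ih (by omega) i (by omega)
        refine ⟨p.concat (hadj j (by omega)), ?_⟩
        intro w hw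
        rw [SimpleGraph.Walk.support_concat, List.mem_append] at hw
        rcases hw with hw | hw
        · obtain ⟨k, h1, h2, h3⟩ := hp w hw
          exact ⟨k, h1, by omega, h3⟩
        · rw [List.mem_singleton] at hw
          exact ⟨j + 1, by omega, le_rfl, hw⟩
      · have : i = j + 1 := by omega
        subst this
        refine ⟨SimpleGraph.Walk.nil, ?_⟩
        intro w hw
        rw [SimpleGraph.Walk.support_nil, List.mem_singleton] at hw
        exact ⟨j + 1, le_rfl, le_rfl, hw⟩
  -- ## The greedy dominating set
  set D₀ : Set ℕ := c '' Set.Icc 1 d with hD₀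
  have hDsub : D₀ ⊆ Set.Icc 1 n := by
    rintro x ⟨i, ⟨h1, h2⟩, rfl⟩
    exact ⟨hrange1 i (by omega), hub i (by omega)⟩
  -- ## The connecting walk for `u < v` both outside `D₀`
  have hconnect : ∀ u v : ℕ, u ∈ Set.Icc 1 n → v ∈ Set.Icc 1 n → u ∉ D₀ → v ∉ D₀ → u < v →
      ∃ p : G.Walk u v, ∀ w ∈ p.support, w = u ∨ w = v ∨ w ∈ D₀ := by
    intro u v hu hv hud hvd huv
    have hLuv : lvl u ≤ lvl v := hlvl_mono u v huv.le hv.2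
    have hLu_top := hlvl_top u hu.2
    have hLv_top := hlvl_top v hv.2
    have hu_le : u ≤ c (lvl u) := hlvl_spec u hu.2
    have hv_le : v ≤ c (lvl v) := hlvl_spec v hv.2
    have hL1 : 1 ≤ lvl v := by
      by_contra hcon
      push_neg at hcon
      have h0 : lvl v = 0 := by omega
      rw [h0, hc0] at hv_le
      have := hu.1
      omega
    have hvgt : c (lvl v - 1) < v := hlvl_not v (lvl v - 1) (by omega)
    have hadjLv : G.Adj (c (lvl v - 1)) (c (lvl v)) := by
      have h' := hadj (lvl v - 1) (by omega)
      have h'' : lvl v - 1 + 1 = lvl v := by omega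
      rwa [h''] at h'
    rcases eq_or_lt_of_le hLuv with heq | hlt2
    · -- same level : single edge
      have hugt : c (lvl v - 1) < u := hlvl_not u (lvl v - 1) (by omega)
      have hAdjuv : G.Adj u v := hclique _ _ _ _ hadjLv hugt.le huv (heq ▸ hv_le)
      refine ⟨SimpleGraph.Walk.cons hAdjuv SimpleGraph.Walk.nil, ?_⟩
      intro w hw
      rw [SimpleGraph.Walk.support_cons, SimpleGraph.Walk.support_nil, List.mem_cons] at hw
      rcases hw with hw | hw
      · exact Or.inl hw
      · rw [List.mem_singleton] at hw
        exact Or.inr (Or.inl hw)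
    · -- lvl u < lvl v : chain walk
      obtain ⟨p, hp⟩ := hchain (lvl v - 1) (by omega) (lvl u) (by omega)
      have hedge2 : G.Adj (c (lvl v - 1)) v := hclique _ _ _ _ hadjLv le_rfl hvgt hv_le
      have hp2 : ∀ w ∈ (p.concat hedge2).support, w = v ∨ ∃ k, lvl u ≤ k ∧ k ≤ lvl v - 1 ∧ w = c k := by
        intro w hw
        rw [SimpleGraph.Walk.support_concat, List.mem_append] at hw
        rcases hw with hw | hw
        · exact Or.inr (hp w hw)
        · rw [List.mem_singleton] at hw
          exact Or.inl hw
      have hkD : ∀ w, ∀ k, lvl u ≤ k → k ≤ lvl v - 1 → w = c k → w = u ∨ w = v ∨ w ∈ D₀ := by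
        intro w k hk1 hk2 hw
        rcases Nat.eq_zero_or_pos k with h0 | h0
        · subst h0
          have hLu0 : lvl u = 0 := by omega
          rw [hLu0, hc0] at hu_le
          have : u = 1 := by have := hu.1; omega
          rw [hw, hc0, this]
          exact Or.inl rfl
        · exact Or.inr (Or.inr ⟨k, ⟨h0, by omega⟩, hw.symm⟩)
      by_cases hucLu : u = c (lvl u)
      · refine ⟨(p.concat hedge2).copy hucLu.symm rfl, ?_⟩
        intro w hw
        rw [SimpleGraph.Walk.support_copy] at hw
        rcases hp2 w hw with hw' | ⟨k, hk1, hk2, hw'⟩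
        · exact Or.inr (Or.inl hw')
        · exact hkD w k hk1 hk2 hw'
      · have huIt : u < c (lvl u) := lt_of_le_of_ne hu_le hucLu
        have hedge1 : G.Adj u (c (lvl u)) := by
          rcases Nat.eq_zero_or_pos (lvl u) with h0 | h0
          · exfalso
            apply hucLu
            rw [h0, hc0]
            have := hu.1
            rw [h0, hc0] at hu_le
            omega
          · have hugt : c (lvl u - 1) < u := hlvl_not u (lvl u - 1) (by omega)
            have hadjLu : G.Adj (c (lvl u - 1)) (c (lvl u)) := by
              have h' := hadj (lvl u - 1) (by omega)
              have h'' : lvl u - 1 + 1 = lvl u := by omega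
              rwa [h''] at h'
            exact hclique _ _ _ _ hadjLu hugt.le huIt le_rfl
        refine ⟨SimpleGraph.Walk.cons hedge1 (p.concat hedge2), ?_⟩
        intro w hw
        rw [SimpleGraph.Walk.support_cons, List.mem_cons] at hw
        rcases hw with hw | hw
        · exact Or.inl hw
        · rcases hp2 w hw with hw' | ⟨k, hk1, hk2, hw'⟩
          · exact Or.inr (Or.inl hw')
          · exact hkD w k hk1 hk2 hw'
  refine ⟨⟨hDsub, ?_, ?_⟩, ?_, ?_⟩
  · -- connectivity of the induced graph
    rcases Nat.eq_zero_or_pos d with hd0 | hd0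
    · left
      subst hd0
      rw [hD₀, Set.Icc_eq_empty (by omega), Set.image_empty]
    · right
      have hmem1 : c 1 ∈ D₀ := ⟨1, ⟨le_rfl, hd0⟩, rfl⟩
      have hreach : ∀ i, ∀ h1 : 1 ≤ i, ∀ h2 : i ≤ d,
          (G.induce D₀).Reachable ⟨c 1, hmem1⟩ ⟨c i, ⟨i, ⟨h1, h2⟩, rfl⟩⟩ := by
        intro i
        induction i with
        | zero => intro h1 _; omega
        | succ k ih =>
          intro h1 h2
          rcases Nat.eq_zero_or_pos k with h0 | h0
          · subst h0
            exact SimpleGraph.Reachable.refl _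
          · have hk := ih h0 (by omega)
            refine hk.trans ?_
            have hAdjI : (G.induce D₀).Adj ⟨c k, ⟨k, ⟨h0, by omega⟩, rfl⟩⟩
                ⟨c (k + 1), ⟨k + 1, ⟨h1, h2⟩, rfl⟩⟩ := hadj k (by omega)
            exact hAdjI.reachable
      haveI : Nonempty ↑D₀ := ⟨⟨c 1, hmem1⟩⟩
      refine ⟨?_⟩
      rintro ⟨x, hx⟩ ⟨y, hy⟩
      obtain ⟨i, hi, rfl⟩ := hx
      obtain ⟨j, hj, rfl⟩ := hy
      exact (hreach i hi.1 hi.2).symm.trans (hreach j hj.1 hj.2)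
  · -- domination walks
    intro u hu v hv
    rcases lt_trichotomy u v with h | h | h
    · obtain ⟨p, hp⟩ := hconnect u v hu.1 hv.1 hu.2 hv.2 h
      exact ⟨p, hp⟩
    · subst h
      refine ⟨SimpleGraph.Walk.nil, ?_⟩
      intro w hw
      rw [SimpleGraph.Walk.support_nil, List.mem_singleton] at hw
      exact Or.inl hw
    · obtain ⟨p, hp⟩ := hconnect v u hv.1 hu.1 hv.2 hu.2 h
      refine ⟨p.reverse, ?_⟩
      intro w hw
      rw [SimpleGraph.Walk.support_reverse, List.mem_reverse] at hw
      rcases hp w hw with h' | h' | h'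
      · exact Or.inr (Or.inl h')
      · exact Or.inl h'
      · exact Or.inr (Or.inr h')
  · -- cardinality
    have hinj : Set.InjOn c (Set.Icc 1 d) := by
      intro i hi j hj hij
      rw [Set.mem_Icc] at hi hj
      by_contra hne'
      rcases Nat.lt_or_ge i j with h | h
      · have := hlt' i j h (by omega)
        omega
      · have hji : j < i := by omega
        have := hlt' j i hji (by omega)
        omega
    rw [hD₀, Set.ncard_image_of_injOn hinj, ← Finset.coe_Icc, Set.ncard_coe_finset, Nat.card_Icc]
    omega
  · -- minimality
    intro D hD
    obtain ⟨hD1, _, hD3⟩ := hD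
    have hDfin : D.Finite := Set.Finite.subset (Set.finite_Icc 1 n) hD1
    have hDcard : D.ncard = hDfin.toFinset.card := Set.ncard_eq_toFinset_card D hDfin
    set S : Finset ℕ := (Finset.Icc 1 n).filter (fun x => x ∉ D) with hSdef
    have hSmem : ∀ x, x ∈ S ↔ (1 ≤ x ∧ x ≤ n ∧ x ∉ D) := by
      intro x
      rw [hSdef, Finset.mem_filter, Finset.mem_Icc]
      tauto
    by_cases hS : S.Nonempty
    · set u := S.min' hS with hudef
      set v := S.max' hS with hvdef
      have huS := (hSmem u).mp (S.min'_mem hS)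
      have hvS := (hSmem v).mp (S.max'_mem hS)
      have huv : u ≤ v := S.min'_le _ (S.max'_mem hS)
      have hT1 : ∀ x ∈ Finset.Ico 1 u, x ∈ D := by
        intro x hx
        rw [Finset.mem_Ico] at hx
        by_contra hxD
        have hxS : x ∈ S := (hSmem x).mpr ⟨hx.1, by omega, hxD⟩
        have := S.min'_le x hxS
        omega
      have hT3 : ∀ x ∈ Finset.Ioc v n, x ∈ D := by
        intro x hx
        rw [Finset.mem_Ioc] at hx
        by_contra hxD
        have hxS : x ∈ S := (hSmem x).mpr ⟨by omega, hx.2, hxD⟩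
        have := S.le_max' x hxS
        omega
      rcases eq_or_lt_of_le huv with heq | hlt3
      · -- only one missing vertex
        have hsub : Finset.Ico 1 u ∪ Finset.Ioc v n ⊆ hDfin.toFinset := by
          intro x hx
          rw [Finset.mem_union] at hx
          rw [Set.Finite.mem_toFinset]
          rcases hx with hx | hx
          · exact hT1 x hx
          · exact hT3 x hx
        have hdisj : Disjoint (Finset.Ico 1 u) (Finset.Ioc v n) := by
          rw [Finset.disjoint_left]
          intro x hx hx'
          rw [Finset.mem_Ico] at hx
          rw [Finset.mem_Ioc] at hx'
          omega
        have hcard := Finset.card_le_card hsub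
        rw [Finset.card_union_of_disjoint hdisj, Nat.card_Ico, Nat.card_Ioc] at hcard
        omega
      · -- u < v : use a connecting walk through D
        have humem : u ∈ Set.Icc 1 n \ D := ⟨⟨huS.1, huS.2.1⟩, huS.2.2⟩
        have hvmem : v ∈ Set.Icc 1 n \ D := ⟨⟨hvS.1, hvS.2.1⟩, hvS.2.2⟩
        obtain ⟨p, hp⟩ := hD3 u humem v hvmem
        set wf : ℕ → ℕ := fun L => if h : ∃ w ∈ p.support, lvl w = L then h.choose else 0 with hwf
        have hw2 : ∀ L ∈ Finset.Ioo (lvl u) (lvl v), wf L ∈ p.support ∧ lvl (wf L) = L := by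
          intro L hL
          rw [Finset.mem_Ioo] at hL
          have hex : ∃ w ∈ p.support, lvl w = L := hwalk u v p L hL.1 hL.2.le
          rw [hwf]
          simp only [dif_pos hex]
          exact hex.choose_spec
        have hw3 : ∀ L ∈ Finset.Ioo (lvl u) (lvl v), wf L ∈ D ∧ u < wf L ∧ wf L < v := by
          intro L hL
          obtain ⟨hsup, hlw⟩ := hw2 L hL
          rw [Finset.mem_Ioo] at hL
          have hwD : wf L ∈ D := by
            rcases hp (wf L) hsup with h' | h' | h'
            · exfalso; rw [h'] at hlw; omega
            · exfalso; rw [h'] at hlw; omega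
            · exact h'
          have hwn : wf L ≤ n := (hD1 hwD).2
          constructor
          · exact hwD
          constructor
          · by_contra hcon
            push_neg at hcon
            have := hlvl_mono (wf L) u hcon huS.2.1
            omega
          · by_contra hcon
            push_neg at hcon
            have := hlvl_mono v (wf L) hcon hwn
            omega
        set T2 : Finset ℕ := (Finset.Ioo (lvl u) (lvl v)).image wf with hT2def
        have hT2card : T2.card = (Finset.Ioo (lvl u) (lvl v)).card := by
          rw [hT2def]
          apply Finset.card_image_of_injOn
          intro a ha b hb hab
          rw [Finset.mem_coe] at ha hb
          have h1 := (hw2 a ha).2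
          have h2 := (hw2 b hb).2
          rw [hab] at h1
          omega
        have hsub : (Finset.Ico 1 u ∪ T2) ∪ Finset.Ioc v n ⊆ hDfin.toFinset := by
          intro x hx
          rw [Finset.mem_union, Finset.mem_union] at hx
          rw [Set.Finite.mem_toFinset]
          rcases hx with (hx | hx) | hx
          · exact hT1 x hx
          · rw [hT2def, Finset.mem_image] at hx
            obtain ⟨L, hL, rfl⟩ := hx
            exact (hw3 L hL).1
          · exact hT3 x hx
        have hd12 : Disjoint (Finset.Ico 1 u) T2 := by
          rw [Finset.disjoint_left]
          intro x hx hx'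
          rw [Finset.mem_Ico] at hx
          rw [hT2def, Finset.mem_image] at hx'
          obtain ⟨L, hL, rfl⟩ := hx'
          have := (hw3 L hL).2.1
          omega
        have hd123 : Disjoint (Finset.Ico 1 u ∪ T2) (Finset.Ioc v n) := by
          rw [Finset.disjoint_left]
          intro x hx hx'
          rw [Finset.mem_Ioc] at hx'
          rw [Finset.mem_union] at hx
          rcases hx with hx | hx
          · rw [Finset.mem_Ico] at hx
            omega
          · rw [hT2def, Finset.mem_image] at hx
            obtain ⟨L, hL, rfl⟩ := hx
            have := (hw3 L hL).2.2
            omega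
        have hcard := Finset.card_le_card hsub
        rw [Finset.card_union_of_disjoint hd123, Finset.card_union_of_disjoint hd12,
          Nat.card_Ico, Nat.card_Ioc, hT2card, Nat.card_Ioo] at hcard
        have hlu := hlvl_lt_self u huS.1 huS.2.1
        have hlv := hlvl_lb v hvS.2.1
        omega
    · -- the complement is empty
      rw [Finset.not_nonempty_iff_eq_empty] at hS
      have hsub : Set.Icc 1 n ⊆ D := by
        intro x hx
        by_contra hxD
        have : x ∈ S := (hSmem x).mpr ⟨hx.1, hx.2, hxD⟩
        rw [hS] at this
        exact absurd this (Finset.notMem_empty x)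
      have h1 : (Set.Icc 1 n).ncard ≤ D.ncard := Set.ncard_le_ncard hsub hDfin
      rw [← Finset.coe_Icc, Set.ncard_coe_finset, Nat.card_Icc] at h1
      omega
end

section
/- Let G be a connected closed graph on [n] with maximal cliques F_i = [a_i, b_i], i = 1, …, t, where 1 = a_1 < ⋯ < a_t and b_t = n, and let W_i = F_i ∩ F_{i+1} for 1 ≤ i ≤ t − 1. Then a non-empty subset T ⊆ [n] is a cut set of G if and only if T = W_{j_1} ⊔ ⋯ ⊔ W_{j_s} for some s ≥ 1 and 1 ≤ j_1 < ⋯ < j_s ≤ t − 1, with max(W_{j_i}) + 1 < min(W_{j_{i+1}}) for all 1 ≤ i ≤ s − 1. -/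
/-- Number of connected components of the induced subgraph of `G` on `S`. -/
noncomputable def numComponents (G : SimpleGraph ℕ) (S : Set ℕ) : ℕ :=
  Nat.card (G.induce S).ConnectedComponent

/-- `T` is a cut set of `G` (with vertex set `[1,n]`): `T ⊆ [1,n]` and every `v ∈ T`
is a cut vertex of the induced subgraph `G \ (T \ {v})`, i.e. deleting `v` from
`G \ (T \ {v})` strictly increases the number of connected components. -/
def IsCutSet (n : ℕ) (G : SimpleGraph ℕ) (T : Set ℕ) : Prop :=
  T ⊆ Set.Icc 1 n ∧
  ∀ v ∈ T, numComponents G (Set.Icc 1 n \ (T \ {v})) < numComponents G (Set.Icc 1 n \ T)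

private lemma reachable_invariant {V : Type*} {H : SimpleGraph V} {β : Sort*} (g : V → β)
    (hg : ∀ u v, H.Adj u v → g u = g v) {u v : V} (h : H.Reachable u v) : g u = g v := by
  obtain ⟨w⟩ := h
  induction w with
  | nil => rfl
  | cons h p ih => exact (hg _ _ h).trans ih

private lemma card_le_of_invariant {V : Type*} [Finite V] {H : SimpleGraph V} {β : Type*}
    (g : V → β) (hg : ∀ u v, H.Adj u v → g u = g v) (hsurj : Function.Surjective g) :
    Nat.card β ≤ Nat.card H.ConnectedComponent := by
  refine Nat.card_le_card_of_surjective
    (SimpleGraph.ConnectedComponent.lift g (fun u v p _ => reachable_invariant g hg ⟨p⟩)) ?_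
  intro x
  obtain ⟨y, rfl⟩ := hsurj x
  exact ⟨H.connectedComponentMk y, rfl⟩

private lemma backward_dir (n t : ℕ) (ht : 1 ≤ t) (G : SimpleGraph ℕ) (a b : ℕ → ℕ)
    (ha1 : a 1 = 1) (hbt : b t = n)
    (hamono : StrictMonoOn a (Set.Icc 1 t))
    (hbmono : StrictMonoOn b (Set.Icc 1 t))
    (hoverlap : ∀ i : ℕ, 1 ≤ i → i < t → a (i + 1) ≤ b i)
    (hadj : ∀ u v : ℕ, G.Adj u v ↔
      u ≠ v ∧ ∃ i ∈ Set.Icc 1 t, u ∈ Set.Icc (a i) (b i) ∧ v ∈ Set.Icc (a i) (b i))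
    (T : Set ℕ) (hTsub : T ⊆ Set.Icc 1 n)
    (s : ℕ) (hs : 1 ≤ s) (j : ℕ → ℕ)
    (hjrange : ∀ i ∈ Set.Icc 1 s, 1 ≤ j i ∧ j i ≤ t - 1)
    (hjmono : StrictMonoOn j (Set.Icc 1 s))
    (hTeq : T = ⋃ i ∈ Set.Icc 1 s, Set.Icc (a (j i + 1)) (b (j i)))
    (hgap : ∀ i : ℕ, 1 ≤ i → i ≤ s - 1 → b (j i) + 1 < a (j (i + 1) + 1)) :
    IsCutSet n G T := by
  classical
  constructor
  · exact hTsub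
  intro v hv
  set S : Set ℕ := Set.Icc 1 n \ T with hS
  set S' : Set ℕ := Set.Icc 1 n \ (T \ {v}) with hS'
  haveI : Finite ↥S := Set.Finite.to_subtype ((Set.finite_Icc 1 n).subset Set.diff_subset)
  haveI : Finite ↥S' := Set.Finite.to_subtype ((Set.finite_Icc 1 n).subset Set.diff_subset)
  have hmemT : ∀ x, x ∈ T ↔ ∃ i, (1 ≤ i ∧ i ≤ s) ∧ a (j i + 1) ≤ x ∧ x ≤ b (j i) := by
    intro x
    rw [hTeq]
    simp only [Set.mem_iUnion, Set.mem_Icc, exists_prop]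
  obtain ⟨i₀, ⟨hi01, hi0s⟩, hva, hvb⟩ := (hmemT v).mp hv
  have hj0 := hjrange i₀ ⟨hi01, hi0s⟩
  have hchain : ∀ i i', 1 ≤ i → i < i' → i' ≤ s → b (j i) + 1 < a (j i' + 1) := by
    intro i i' h1 h2 h3
    have h2' : i + 1 ≤ i' := h2
    clear h2
    revert h3
    induction i', h2' using Nat.le_induction with
    | base =>
      intro h3
      exact hgap i h1 (by omega)
    | succ m hm ih =>
      intro h3
      have h6 := ih (by omega)
      have hrm := hjrange m ⟨by omega, by omega⟩
      have hrm1 := hrm.1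
      have hrm2 := hrm.2
      have h4 : a (j m + 1) ≤ b (j m) := hoverlap (j m) hrm1 (by omega)
      have h5 := hgap m (by omega) (by omega)
      omega
  have hi0t : j i₀ + 1 ∈ Set.Icc 1 t := ⟨by omega, by omega⟩
  have hi0t' : j i₀ ∈ Set.Icc 1 t := ⟨hj0.1, by omega⟩
  have h1t : (1 : ℕ) ∈ Set.Icc 1 t := ⟨le_refl 1, ht⟩
  have htt : t ∈ Set.Icc 1 t := ⟨ht, le_refl t⟩
  have ha2 : 2 ≤ a (j i₀ + 1) := by
    have := hamono h1t hi0t (by omega)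
    omega
  set p := a (j i₀ + 1) - 1 with hp
  set q := b (j i₀) + 1 with hq
  have hov : a (j i₀ + 1) ≤ b (j i₀) := hoverlap (j i₀) hj0.1 (by omega)
  have hbtle : b (j i₀) < b t := hbmono hi0t' htt (by omega)
  have haj : a (j i₀) < a (j i₀ + 1) := hamono hi0t' hi0t (by omega)
  have hbj : b (j i₀) < b (j i₀ + 1) := hbmono hi0t' hi0t (by omega)
  have hWsub : ∀ i, 1 ≤ i → i ≤ s → ∀ x, a (j i + 1) ≤ x → x ≤ b (j i) → x ∈ T := by
    intro i h1 h2 x hx1 hx2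
    exact (hmemT x).mpr ⟨i, ⟨h1, h2⟩, hx1, hx2⟩
  have hpT : p ∉ T := by
    intro hpT
    obtain ⟨i, ⟨h1, h2⟩, hx1, hx2⟩ := (hmemT p).mp hpT
    rcases lt_trichotomy i i₀ with hlt | rfl | hlt
    · have := hchain i i₀ h1 hlt hi0s
      omega
    · omega
    · have := hchain i₀ i hi01 hlt h2
      omega
  have hqT : q ∉ T := by
    intro hqT
    obtain ⟨i, ⟨h1, h2⟩, hx1, hx2⟩ := (hmemT q).mp hqT
    rcases lt_trichotomy i i₀ with hlt | rfl | hlt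
    · have hri := hjrange i ⟨h1, h2⟩
      have hbi : b (j i) < b (j i₀) :=
        hbmono ⟨hri.1, by omega⟩ hi0t' (hjmono ⟨h1, h2⟩ ⟨hi01, hi0s⟩ hlt)
      omega
    · omega
    · have := hchain i₀ i hi01 hlt h2
      omega
  have hpn : p ∈ Set.Icc 1 n := ⟨by omega, by omega⟩
  have hqn : q ∈ Set.Icc 1 n := ⟨by omega, by omega⟩
  have hpS : p ∈ S := ⟨hpn, hpT⟩
  have hqS : q ∈ S := ⟨hqn, hqT⟩
  have hAdjpv : G.Adj p v :=
    (hadj p v).mpr ⟨by omega, j i₀, hi0t', ⟨by omega, by omega⟩, ⟨by omega, hvb⟩⟩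
  have hAdjvq : G.Adj v q :=
    (hadj v q).mpr ⟨by omega, j i₀ + 1, hi0t, ⟨hva, by omega⟩, ⟨by omega, by omega⟩⟩
  set f : ℕ → ℕ := fun x => ((Finset.Icc 1 s).filter (fun i => b (j i) < x)).card with hf
  have haux : ∀ x y : ℕ, x ∈ S → y ∈ S → G.Adj x y →
      ∀ i, 1 ≤ i → i ≤ s → b (j i) < x → b (j i) < y := by
    intro x y hxS hyS hxy i h1 h2 hbx
    by_contra hby
    push_neg at hby
    have hyT : y ∉ T := hyS.2
    have hya : y < a (j i + 1) := by
      by_contra hya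
      push_neg at hya
      exact hyT (hWsub i h1 h2 y hya hby)
    obtain ⟨hne, m, hmmem, hxm, hym⟩ := (hadj x y).mp hxy
    have hji := hjrange i ⟨h1, h2⟩
    have hjit : j i + 1 ∈ Set.Icc 1 t := ⟨by omega, by omega⟩
    have ham : a m < a (j i + 1) := by
      have := hym.1
      omega
    have hmlt : m < j i + 1 := (hamono.lt_iff_lt hmmem hjit).mp ham
    have hbm : b m ≤ b (j i) := hbmono.monotoneOn hmmem ⟨hji.1, by omega⟩ (by omega)
    have := hxm.2
    omega
  have hfinv : ∀ x y : ℕ, x ∈ S → y ∈ S → G.Adj x y → f x = f y := by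
    intro x y hxS hyS hxy
    simp only [hf]
    congr 1
    apply Finset.ext
    intro i
    simp only [Finset.mem_filter, Finset.mem_Icc]
    constructor
    · rintro ⟨⟨h1, h2⟩, h3⟩
      exact ⟨⟨h1, h2⟩, haux x y hxS hyS hxy i h1 h2 h3⟩
    · rintro ⟨⟨h1, h2⟩, h3⟩
      exact ⟨⟨h1, h2⟩, haux y x hyS hxS hxy.symm i h1 h2 h3⟩
  have hreach_f : ∀ (u w : ↥S), (G.induce S).Reachable u w → f u.1 = f w.1 := by
    intro u w h
    exact reachable_invariant (fun z : ↥S => f z.1)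
      (fun z z' hzz => hfinv z.1 z'.1 z.2 z'.2 hzz) h
  have hfpq : f p < f q := by
    simp only [hf]
    apply Finset.card_lt_card
    rw [Finset.ssubset_iff_of_subset]
    · refine ⟨i₀, ?_, ?_⟩
      · simp only [Finset.mem_filter, Finset.mem_Icc]
        exact ⟨⟨hi01, hi0s⟩, by omega⟩
      · simp only [Finset.mem_filter, Finset.mem_Icc, not_and]
        intro _
        omega
    · intro i hi
      simp only [Finset.mem_filter, Finset.mem_Icc] at hi ⊢
      exact ⟨hi.1, by omega⟩
  have hnreach : ¬ (G.induce S).Reachable ⟨p, hpS⟩ ⟨q, hqS⟩ := by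
    intro h
    have := hreach_f _ _ h
    simp only at this
    omega
  have hSS' : S ⊆ S' := fun x hx => ⟨hx.1, fun hxT => hx.2 hxT.1⟩
  have hvS' : v ∈ S' := ⟨hTsub hv, fun hvT => hvT.2 rfl⟩
  have hcases : ∀ w, w ∈ S' → w ∈ S ∨ w = v := by
    intro w hw
    by_cases hwT : w ∈ T
    · right
      by_contra hne
      exact hw.2 ⟨hwT, fun h => hne h⟩
    · left
      exact ⟨hw.1, hwT⟩
  let φ : G.induce S →g G.induce S' := ⟨fun w => ⟨w.1, hSS' w.2⟩, fun {x y} h => h⟩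
  let κ := SimpleGraph.ConnectedComponent.map φ
  have hmk : ∀ (x : ↥S), κ ((G.induce S).connectedComponentMk x) =
      (G.induce S').connectedComponentMk ⟨x.1, hSS' x.2⟩ := fun x => rfl
  have hAdjvq' : (G.induce S').Adj ⟨v, hvS'⟩ ⟨q, hSS' hqS⟩ := hAdjvq
  have hAdjpv' : (G.induce S').Adj ⟨p, hSS' hpS⟩ ⟨v, hvS'⟩ := hAdjpv
  have hsurj : Function.Surjective κ := by
    intro c
    refine SimpleGraph.ConnectedComponent.ind (fun w => ?_) c
    rcases hcases w.1 w.2 with hwS | hwv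
    · exact ⟨(G.induce S).connectedComponentMk ⟨w.1, hwS⟩, rfl⟩
    · refine ⟨(G.induce S).connectedComponentMk ⟨q, hqS⟩, ?_⟩
      rw [hmk]
      have hw : w = ⟨v, hvS'⟩ := Subtype.ext hwv
      rw [hw]
      exact SimpleGraph.ConnectedComponent.sound hAdjvq'.symm.reachable
  have hninj : ¬ Function.Injective κ := by
    intro hinj
    have h1 : κ ((G.induce S).connectedComponentMk ⟨p, hpS⟩) =
        κ ((G.induce S).connectedComponentMk ⟨q, hqS⟩) := by
      rw [hmk, hmk]
      exact SimpleGraph.ConnectedComponent.sound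
        (hAdjpv'.reachable.trans hAdjvq'.reachable)
    exact hnreach (SimpleGraph.ConnectedComponent.exact (hinj h1))
  haveI : Fintype (G.induce S).ConnectedComponent := Fintype.ofFinite _
  haveI : Fintype (G.induce S').ConnectedComponent := Fintype.ofFinite _
  have hlt := Fintype.card_lt_of_surjective_not_injective κ hsurj hninj
  show numComponents G S' < numComponents G S
  unfold numComponents
  rw [Nat.card_eq_fintype_card, Nat.card_eq_fintype_card]
  exact hlt

private lemma forward_dir (n t : ℕ) (ht : 1 ≤ t) (G : SimpleGraph ℕ) (a b : ℕ → ℕ)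
    (ha1 : a 1 = 1) (hbt : b t = n)
    (hamono : StrictMonoOn a (Set.Icc 1 t))
    (hbmono : StrictMonoOn b (Set.Icc 1 t))
    (hadj : ∀ u v : ℕ, G.Adj u v ↔
      u ≠ v ∧ ∃ i ∈ Set.Icc 1 t, u ∈ Set.Icc (a i) (b i) ∧ v ∈ Set.Icc (a i) (b i))
    (T : Set ℕ) (hT : T.Nonempty) (hTsub : T ⊆ Set.Icc 1 n)
    (hcut : IsCutSet n G T) :
    ∃ s : ℕ, 1 ≤ s ∧ ∃ j : ℕ → ℕ,
        (∀ i ∈ Set.Icc 1 s, 1 ≤ j i ∧ j i ≤ t - 1) ∧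
        StrictMonoOn j (Set.Icc 1 s) ∧
        T = ⋃ i ∈ Set.Icc 1 s, Set.Icc (a (j i + 1)) (b (j i)) ∧
        ∀ i : ℕ, 1 ≤ i → i ≤ s - 1 → b (j i) + 1 < a (j (i + 1) + 1) := by
  classical
  set S : Set ℕ := Set.Icc 1 n \ T with hS
  haveI hSfin : Finite ↥S := Set.Finite.to_subtype ((Set.finite_Icc 1 n).subset Set.diff_subset)
  have hvnotS : ∀ v ∈ T, v ∉ S := fun v hv h => h.2 hv
  have hW : ∀ x y : ℕ, x ≠ y →
      (∃ i ∈ Set.Icc 1 t, x ∈ Set.Icc (a i) (b i) ∧ y ∈ Set.Icc (a i) (b i)) → G.Adj x y :=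
    fun x y h1 h2 => (hadj x y).mpr ⟨h1, h2⟩
  -- Step 1: every v ∈ T has two neighbours in different components of G[S]
  have hstep : ∀ v ∈ T, ∃ p q : ↥S, G.Adj p.1 v ∧ G.Adj q.1 v ∧
      ¬ (G.induce S).Reachable p q := by
    intro v hv
    have hlt : numComponents G (Set.Icc 1 n \ (T \ {v})) < numComponents G S := hcut.2 v hv
    set S' : Set ℕ := Set.Icc 1 n \ (T \ {v}) with hS'
    haveI : Finite ↥S' := Set.Finite.to_subtype ((Set.finite_Icc 1 n).subset Set.diff_subset)
    by_contra hcon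
    push_neg at hcon
    have hSS' : S ⊆ S' := fun x hx => ⟨hx.1, fun hxT => hx.2 hxT.1⟩
    have hvmem : ∀ w : ℕ, w ∈ S' → w ∉ S → w = v := by
      intro w hw hns
      by_contra hne
      by_cases hT' : w ∈ T
      · exact hw.2 ⟨hT', fun h => hne h⟩
      · exact hns ⟨hw.1, hT'⟩
    have hpos : 0 < numComponents G S := lt_of_le_of_lt (Nat.zero_le _) hlt
    haveI hne : Nonempty (G.induce S).ConnectedComponent := by
      have h := Nat.card_pos_iff.mp hpos
      exact h.1
    let g : ↥S' → (G.induce S).ConnectedComponent := fun w =>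
      if h1 : w.1 ∈ S then (G.induce S).connectedComponentMk ⟨w.1, h1⟩
      else if h2 : ∃ p : ↥S, G.Adj p.1 v then
        (G.induce S).connectedComponentMk h2.choose
      else Classical.arbitrary _
    have hginv : ∀ u w : ↥S', (G.induce S').Adj u w → g u = g w := by
      intro u w huw
      have hadj' : G.Adj u.1 w.1 := huw
      by_cases h1 : u.1 ∈ S <;> by_cases h2 : w.1 ∈ S
      · simp only [g, dif_pos h1, dif_pos h2]
        exact SimpleGraph.ConnectedComponent.connectedComponentMk_eq_of_adj hadj'
      · have hwv := hvmem w.1 w.2 h2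
        have hu_adj : G.Adj u.1 v := hwv ▸ hadj'
        have hex : ∃ p : ↥S, G.Adj p.1 v := ⟨⟨u.1, h1⟩, hu_adj⟩
        simp only [g, dif_pos h1, dif_neg h2, dif_pos hex]
        exact SimpleGraph.ConnectedComponent.sound
          (hcon ⟨u.1, h1⟩ hex.choose hu_adj hex.choose_spec)
      · have huv := hvmem u.1 u.2 h1
        have hw_adj : G.Adj w.1 v := huv ▸ hadj'.symm
        have hex : ∃ p : ↥S, G.Adj p.1 v := ⟨⟨w.1, h2⟩, hw_adj⟩
        simp only [g, dif_neg h1, dif_pos h2, dif_pos hex]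
        exact (SimpleGraph.ConnectedComponent.sound
          (hcon ⟨w.1, h2⟩ hex.choose hw_adj hex.choose_spec)).symm
      · have e1 := hvmem u.1 u.2 h1
        have e2 := hvmem w.1 w.2 h2
        rw [e1, e2] at hadj'
        exact absurd hadj' (G.loopless.irrefl v)
    have hgsurj : Function.Surjective g := by
      intro c
      refine SimpleGraph.ConnectedComponent.ind (fun x => ?_) c
      refine ⟨⟨x.1, hSS' x.2⟩, ?_⟩
      simp only [g, dif_pos x.2]
    have hle := card_le_of_invariant g hginv hgsurj
    have hlt' : Nat.card (G.induce S').ConnectedComponent <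
        Nat.card (G.induce S).ConnectedComponent := hlt
    omega
  -- Step 2: the two neighbours can be taken on both sides of v
  have hstep2 : ∀ v ∈ T, ∃ p q : ↥S, p.1 < v ∧ v < q.1 ∧ G.Adj p.1 v ∧ G.Adj v q.1 ∧
      ¬ (G.induce S).Reachable p q := by
    intro v hv
    obtain ⟨p, q, hpv, hqv, hnr⟩ := hstep v hv
    have hpne : p.1 ≠ v := fun h => (hvnotS v hv) (h ▸ p.2)
    have hqne : q.1 ≠ v := fun h => (hvnotS v hv) (h ▸ q.2)
    have hpq : p.1 ≠ q.1 := by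
      intro h
      exact hnr (by rw [Subtype.ext h])
    rcases lt_or_gt_of_ne hpne with hp1 | hp1 <;> rcases lt_or_gt_of_ne hqne with hq1 | hq1
    · -- both below v: contradiction
      exfalso
      rcases lt_or_gt_of_ne hpq with hlt | hlt
      · obtain ⟨-, i, hi, hpi, hvi⟩ := (hadj p.1 v).mp hpv
        have : G.Adj p.1 q.1 := hW _ _ hpq
          ⟨i, hi, hpi, ⟨le_trans hpi.1 (le_of_lt hlt), le_trans (le_of_lt hq1) hvi.2⟩⟩
        exact hnr (SimpleGraph.Adj.reachable (show (G.induce S).Adj p q from this))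
      · obtain ⟨-, i, hi, hqi, hvi⟩ := (hadj q.1 v).mp hqv
        have : G.Adj p.1 q.1 := (hW _ _ (Ne.symm hpq)
          ⟨i, hi, hqi, ⟨le_trans hqi.1 (le_of_lt hlt), le_trans (le_of_lt hp1) hvi.2⟩⟩).symm
        exact hnr (SimpleGraph.Adj.reachable (show (G.induce S).Adj p q from this))
    · exact ⟨p, q, hp1, hq1, hpv, hqv.symm, hnr⟩
    · exact ⟨q, p, hq1, hp1, hqv, hpv.symm, fun h => hnr h.symm⟩
    · -- both above v: contradiction
      exfalso
      rcases lt_or_gt_of_ne hpq with hlt | hlt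
      · obtain ⟨-, i, hi, hqi, hvi⟩ := (hadj q.1 v).mp hqv
        have : G.Adj p.1 q.1 := hW _ _ hpq
          ⟨i, hi, ⟨le_trans hvi.1 (le_of_lt hp1), le_trans (le_of_lt hlt) hqi.2⟩, hqi⟩
        exact hnr (SimpleGraph.Adj.reachable (show (G.induce S).Adj p q from this))
      · obtain ⟨-, i, hi, hpi, hvi⟩ := (hadj p.1 v).mp hpv
        have : G.Adj p.1 q.1 := hW _ _ hpq
          ⟨i, hi, hpi, ⟨le_trans hvi.1 (le_of_lt hq1), le_trans (le_of_lt hlt) hpi.2⟩⟩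
        exact hnr (SimpleGraph.Adj.reachable (show (G.induce S).Adj p q from this))
  -- Step 3: every v ∈ T lies in some W_j entirely contained in T
  have hC1 : ∀ v ∈ T, ∃ jj, (1 ≤ jj ∧ jj ≤ t - 1) ∧ a (jj + 1) ≤ v ∧ v ≤ b jj ∧
      ∀ x, a (jj + 1) ≤ x → x ≤ b jj → x ∈ T := by
    intro v hv
    obtain ⟨p, q, hp1, hq1, hpv, hqv, hnr⟩ := hstep2 v hv
    obtain ⟨-, i, hi, hpi, hvi⟩ := (hadj p.1 v).mp hpv
    obtain ⟨-, k, hk, hvk, hqk⟩ := (hadj v q.1).mp hqv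
    have hpq : p.1 < q.1 := lt_trans hp1 hq1
    have hik : i < k := by
      rcases lt_trichotomy i k with h | h | h
      · exact h
      · exfalso
        have : G.Adj p.1 q.1 := hW _ _ (ne_of_lt hpq) ⟨i, hi, hpi, h ▸ hqk⟩
        exact hnr (SimpleGraph.Adj.reachable (show (G.induce S).Adj p q from this))
      · exfalso
        have hak : a k ≤ p.1 :=
          le_trans (le_trans (hamono.monotoneOn hk hi (le_of_lt h)) hpi.1) (le_refl _)
        have : G.Adj p.1 q.1 := hW _ _ (ne_of_lt hpq)
          ⟨k, hk, ⟨hak, le_trans (le_of_lt hpq) hqk.2⟩, hqk⟩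
        exact hnr (SimpleGraph.Adj.reachable (show (G.induce S).Adj p q from this))
    have hfree : ∃ jj, i ≤ jj ∧ jj ≤ k - 1 ∧ ∀ x, a (jj + 1) ≤ x → x ≤ b jj → x ∉ S := by
      by_contra hcon
      push_neg at hcon
      have chain : ∀ m, i ≤ m → m ≤ k →
          ∃ y : ↥S, a m ≤ y.1 ∧ y.1 ≤ b m ∧ (G.induce S).Reachable p y := by
        intro m hm
        induction m, hm using Nat.le_induction with
        | base =>
          intro _
          exact ⟨p, hpi.1, hpi.2, SimpleGraph.Reachable.refl p⟩
        | succ m hm ih =>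
          intro hmk
          obtain ⟨y, hy1, hy2, hyr⟩ := ih (by omega)
          obtain ⟨x, hx1, hx2, hxS⟩ := hcon m hm (by omega)
          have hi1 := hi.1
          have hk2 := hk.2
          have hmmem : m ∈ Set.Icc 1 t := ⟨by omega, by omega⟩
          have hm1mem : m + 1 ∈ Set.Icc 1 t := ⟨by omega, by omega⟩
          have hxbm1 : x ≤ b (m + 1) :=
            le_trans hx2 (hbmono.monotoneOn hmmem hm1mem (by omega))
          by_cases hyx : y.1 = x
          · refine ⟨⟨x, hxS⟩, hx1, hxbm1, ?_⟩
            have : (⟨x, hxS⟩ : ↥S) = y := Subtype.ext hyx.symm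
            rwa [this]
          · have hadjyx : G.Adj y.1 x := hW _ _ hyx
              ⟨m, hmmem, ⟨hy1, hy2⟩,
                ⟨le_trans (le_of_lt (hamono hmmem hm1mem (by omega))) hx1, hx2⟩⟩
            exact ⟨⟨x, hxS⟩, hx1, hxbm1, hyr.trans (SimpleGraph.Adj.reachable
              (show (G.induce S).Adj y ⟨x, hxS⟩ from hadjyx))⟩
      obtain ⟨y, hyk1, hyk2, hyr⟩ := chain k (le_of_lt hik) le_rfl
      by_cases hyq : y.1 = q.1
      · exact hnr (by rwa [show y = q from Subtype.ext hyq] at hyr)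
      · have : G.Adj y.1 q.1 := hW _ _ hyq ⟨k, hk, ⟨hyk1, hyk2⟩, hqk⟩
        exact hnr (hyr.trans (SimpleGraph.Adj.reachable
          (show (G.induce S).Adj y q from this)))
    obtain ⟨jj, hij, hjk1, hfr⟩ := hfree
    have hi1 := hi.1
    have hi2 := hi.2
    have hk1 := hk.1
    have hk2 := hk.2
    have hjmem : jj ∈ Set.Icc 1 t := ⟨by omega, by omega⟩
    have hj1mem : jj + 1 ∈ Set.Icc 1 t := ⟨by omega, by omega⟩
    have h1mem : (1 : ℕ) ∈ Set.Icc 1 t := ⟨le_refl 1, ht⟩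
    have htmem : t ∈ Set.Icc 1 t := ⟨ht, le_refl t⟩
    have hav : a (jj + 1) ≤ v := by
      have h1 : a (jj + 1) ≤ a k := hamono.monotoneOn hj1mem hk (by omega)
      exact le_trans h1 hvk.1
    have hvb : v ≤ b jj := le_trans hvi.2 (hbmono.monotoneOn hi hjmem hij)
    have ha1' : 1 ≤ a (jj + 1) := by
      have := hamono.monotoneOn h1mem hj1mem (by omega)
      omega
    have hbn' : b jj ≤ n := by
      have := hbmono.monotoneOn hjmem htmem (by omega)
      omega
    refine ⟨jj, ⟨by omega, by omega⟩, hav, hvb, ?_⟩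
    intro x hx1 hx2
    by_contra hxT
    exact hfr x hx1 hx2 ⟨⟨by omega, by omega⟩, hxT⟩
  -- Step 4: separation of the intervals contained in T
  have hsep : ∀ jj jj' : ℕ, 1 ≤ jj → jj' ≤ t - 1 → jj < jj' →
      (∀ x, a (jj + 1) ≤ x → x ≤ b jj → x ∈ T) →
      (∀ x, a (jj' + 1) ≤ x → x ≤ b jj' → x ∈ T) →
      b jj + 1 < a (jj' + 1) := by
    intro jj jj' h1 h2 hlt hWj hWj'
    by_contra hle
    push_neg at hle
    have hjjmem : jj ∈ Set.Icc 1 t := ⟨h1, by omega⟩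
    have hjj'mem : jj' ∈ Set.Icc 1 t := ⟨by omega, by omega⟩
    have hbb : b jj < b jj' := hbmono hjjmem hjj'mem hlt
    have hv : b jj + 1 ∈ T := hWj' (b jj + 1) hle (by omega)
    obtain ⟨p, q, hp1, hq1, hpadj, hqadj, hnr⟩ := hstep2 _ hv
    obtain ⟨-, m, hm, hpm, hvm⟩ := (hadj p.1 (b jj + 1)).mp hpadj
    have hbm : b jj < b m := by
      have := hvm.2
      omega
    have hmt : jj < m := (hbmono.lt_iff_lt hjjmem hm).mp hbm
    have hjj1mem : jj + 1 ∈ Set.Icc 1 t := ⟨by omega, by omega⟩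
    have hap : a (jj + 1) ≤ p.1 := le_trans (hamono.monotoneOn hjj1mem hm (by omega)) hpm.1
    have hpT : p.1 ∈ T := hWj p.1 hap (by omega)
    exact p.2.2 hpT
  -- Assemble the answer
  set J : Finset ℕ := (Finset.Icc 1 (t - 1)).filter
      (fun jj => ∀ x, a (jj + 1) ≤ x → x ≤ b jj → x ∈ T) with hJ
  have hmemJ : ∀ jj, jj ∈ J ↔
      ((1 ≤ jj ∧ jj ≤ t - 1) ∧ ∀ x, a (jj + 1) ≤ x → x ≤ b jj → x ∈ T) := by
    intro jj
    simp only [hJ, Finset.mem_filter, Finset.mem_Icc]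
  have hJne : J.Nonempty := by
    obtain ⟨v, hv⟩ := hT
    obtain ⟨j0, hj0a, hj0b, hj0c, hj0d⟩ := hC1 v hv
    exact ⟨j0, (hmemJ j0).mpr ⟨hj0a, hj0d⟩⟩
  set s := J.card with hs
  have hs1 : 1 ≤ s := Finset.card_pos.mpr hJne
  let e := J.orderIsoOfFin hs.symm
  set jf : ℕ → ℕ := fun i => if h : i - 1 < s then ((e ⟨i - 1, h⟩ : ↥J) : ℕ) else 0 with hjf
  have hjfJ : ∀ i, 1 ≤ i → i ≤ s → jf i ∈ J := by
    intro i h1 h2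
    have h' : i - 1 < s := by omega
    simp only [hjf, dif_pos h']
    exact (e ⟨i - 1, h'⟩).2
  have hjfmono : StrictMonoOn jf (Set.Icc 1 s) := by
    intro x hx y hy hxy
    obtain ⟨hx1, hx2⟩ := hx
    obtain ⟨hy1, hy2⟩ := hy
    have hx' : x - 1 < s := by omega
    have hy' : y - 1 < s := by omega
    simp only [hjf, dif_pos hx', dif_pos hy']
    have hfin : (⟨x - 1, hx'⟩ : Fin s) < ⟨y - 1, hy'⟩ := by
      simp only [Fin.lt_def]
      omega
    exact Subtype.coe_lt_coe.mpr (e.strictMono hfin)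
  have hinvJ : ∀ jj, ∀ h : jj ∈ J, ∃ i, 1 ≤ i ∧ i ≤ s ∧ jf i = jj := by
    intro jj hjj
    have hlt := (e.symm ⟨jj, hjj⟩).isLt
    refine ⟨(e.symm ⟨jj, hjj⟩ : Fin s).1 + 1, by omega, by omega, ?_⟩
    have h' : (e.symm ⟨jj, hjj⟩ : Fin s).1 + 1 - 1 < s := by omega
    simp only [hjf, dif_pos h']
    have hfe : (⟨(e.symm ⟨jj, hjj⟩ : Fin s).1 + 1 - 1, h'⟩ : Fin s) = e.symm ⟨jj, hjj⟩ := by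
      apply Fin.ext
      simp
    rw [hfe, OrderIso.apply_symm_apply]
  refine ⟨s, hs1, jf, ?_, hjfmono, ?_, ?_⟩
  · intro i hi
    exact ((hmemJ (jf i)).mp (hjfJ i hi.1 hi.2)).1
  · ext v
    simp only [Set.mem_iUnion, Set.mem_Icc, exists_prop]
    constructor
    · intro hv
      obtain ⟨j0, hj0a, hj0b, hj0c, hj0d⟩ := hC1 v hv
      obtain ⟨i, hi1, hi2, hieq⟩ := hinvJ j0 ((hmemJ j0).mpr ⟨hj0a, hj0d⟩)
      refine ⟨i, ⟨hi1, hi2⟩, ?_⟩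
      rw [hieq]
      exact ⟨hj0b, hj0c⟩
    · rintro ⟨i, ⟨hi1, hi2⟩, hv1, hv2⟩
      exact ((hmemJ (jf i)).mp (hjfJ i hi1 hi2)).2 v hv1 hv2
  · intro i h1 h2
    have hi : i ∈ Set.Icc 1 s := ⟨h1, by omega⟩
    have hi' : i + 1 ∈ Set.Icc 1 s := ⟨by omega, by omega⟩
    have hJi := (hmemJ (jf i)).mp (hjfJ i h1 (by omega))
    have hJi' := (hmemJ (jf (i + 1))).mp (hjfJ (i + 1) (by omega) (by omega))
    exact hsep _ _ hJi.1.1 hJi'.1.2 (hjfmono hi hi' (by omega)) hJi.2 hJi'.2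

/-- Proposition: for a connected closed graph `G` on `[1,n]` whose maximal cliques are
the intervals `[a i, b i]`, `i = 1, …, t`, a non-empty `T ⊆ [1,n]` is a cut set of `G`
iff `T` is a union `W_{j 1} ⊔ ⋯ ⊔ W_{j s}` of connected cut sets
`W_i = F_i ∩ F_{i+1} = [a (i+1), b i]` with `max (W_{j i}) + 1 < min (W_{j (i+1)})`. -/
theorem cutSet_iff_union_of_connected_cutSets
    (n t : ℕ) (ht : 1 ≤ t) (G : SimpleGraph ℕ)
    (a b : ℕ → ℕ)
    (ha1 : a 1 = 1) (hbt : b t = n)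
    (hab : ∀ i ∈ Set.Icc 1 t, a i ≤ b i)
    (hamono : StrictMonoOn a (Set.Icc 1 t))
    (hbmono : StrictMonoOn b (Set.Icc 1 t))
    (hoverlap : ∀ i : ℕ, 1 ≤ i → i < t → a (i + 1) ≤ b i)
    (hadj : ∀ u v : ℕ, G.Adj u v ↔
      u ≠ v ∧ ∃ i ∈ Set.Icc 1 t, u ∈ Set.Icc (a i) (b i) ∧ v ∈ Set.Icc (a i) (b i))
    (T : Set ℕ) (hT : T.Nonempty) (hTsub : T ⊆ Set.Icc 1 n) :
    IsCutSet n G T ↔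
      ∃ s : ℕ, 1 ≤ s ∧ ∃ j : ℕ → ℕ,
        (∀ i ∈ Set.Icc 1 s, 1 ≤ j i ∧ j i ≤ t - 1) ∧
        StrictMonoOn j (Set.Icc 1 s) ∧
        T = ⋃ i ∈ Set.Icc 1 s, Set.Icc (a (j i + 1)) (b (j i)) ∧
        ∀ i : ℕ, 1 ≤ i → i ≤ s - 1 → b (j i) + 1 < a (j (i + 1) + 1) := by
  constructor
  · intro hcut
    exact forward_dir n t ht G a b ha1 hbt hamono hbmono hadj T hT hTsub hcut
  · rintro ⟨s, hs, j, hjrange, hjmono, hTeq, hgap⟩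
    exact backward_dir n t ht G a b ha1 hbt hamono hbmono hoverlap hadj T hTsub
      s hs j hjrange hjmono hTeq hgap
end

section
/- Let G be a connected Cohen–Macaulay closed graph whose maximal cliques are F_i = [a_i, a_{i+1}] for integers 1 = a_1 < a_2 < ⋯ < a_t < a_{t+1} = n, and write b_i = a_{i+1}. Then a non-empty subset T of the set {b_1, …, b_{t−1}} of cut vertices, say T = {b_{j_1} < ⋯ < b_{j_s}}, is a cut set of G if and only if b_{j_i} + 2 ≤ b_{j_{i+1}} for all i ∈ [s−1]. Moreover, every cut set of G is contained in {b_1, …, b_{t−1}}. -/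
open Classical in
noncomputable def cfun (t : ℕ) (b : ℕ → ℕ) (T : Set ℕ) (x : ℕ) : ℕ :=
  ((Finset.Icc 1 (t-1)).filter (fun i => b i ∈ T ∧ b i < x)).card

open Classical

lemma cfun_filter_mem {t : ℕ} {b : ℕ → ℕ} {T : Set ℕ} {x i : ℕ} :
    i ∈ (Finset.Icc 1 (t-1)).filter (fun i => b i ∈ T ∧ b i < x) ↔
      (1 ≤ i ∧ i ≤ t - 1) ∧ b i ∈ T ∧ b i < x := by
  simp [Finset.mem_filter, Finset.mem_Icc]

lemma cfun_mono (t : ℕ) (b : ℕ → ℕ) (T : Set ℕ) {x y : ℕ} (h : x ≤ y) :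
    cfun t b T x ≤ cfun t b T y := by
  apply Finset.card_le_card
  intro i hi
  rw [cfun_filter_mem] at hi ⊢
  exact ⟨hi.1, hi.2.1, lt_of_lt_of_le hi.2.2 h⟩

lemma cfun_strict (t : ℕ) (b : ℕ → ℕ) (T : Set ℕ) {x y i : ℕ}
    (hxy : x ≤ y) (hi1 : 1 ≤ i) (hi2 : i ≤ t - 1) (hT : b i ∈ T)
    (h1 : x ≤ b i) (h2 : b i < y) : cfun t b T x < cfun t b T y := by
  apply Finset.card_lt_card
  constructor
  · intro k hk
    rw [cfun_filter_mem] at hk ⊢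
    exact ⟨hk.1, hk.2.1, lt_of_lt_of_le hk.2.2 hxy⟩
  · intro hsub
    have := hsub (cfun_filter_mem.mpr ⟨⟨hi1, hi2⟩, hT, h2⟩)
    rw [cfun_filter_mem] at this
    omega

section Master

variable {n t : ℕ} {G : SimpleGraph ℕ} {b : ℕ → ℕ}

/-- cfun is invariant within a clique. -/
lemma clique_cfun_eq (ht : 1 ≤ t)
    (hbmono : StrictMonoOn b (Set.Icc 0 t)) (T : Set ℕ) {u v i : ℕ}
    (hu : u ∉ T) (huv : u ≤ v) (hi : i ∈ Set.Icc 1 t)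
    (h1 : b (i-1) ≤ u) (h2 : v ≤ b i) : cfun t b T u = cfun t b T v := by
  refine le_antisymm (cfun_mono t b T huv) (Finset.card_le_card ?_)
  intro k hk
  rw [cfun_filter_mem] at hk ⊢
  refine ⟨hk.1, hk.2.1, ?_⟩
  by_contra hlt
  push_neg at hlt
  obtain ⟨⟨hk1, hk2⟩, hkT, hkv⟩ := hk
  have hi1 : 1 ≤ i := hi.1
  have hi2 : i ≤ t := hi.2
  -- u ≤ b k < v, and b (i-1) ≤ u, v ≤ b i
  have hki : k ∈ Set.Icc 0 t := ⟨Nat.zero_le _, by omega⟩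
  have hii : i ∈ Set.Icc 0 t := ⟨Nat.zero_le _, hi2⟩
  have hi1m : i - 1 ∈ Set.Icc 0 t := ⟨Nat.zero_le _, by omega⟩
  have hbk_lt : b k < b i := lt_of_lt_of_le hkv h2
  have hk_lt_i : k < i := (hbmono.lt_iff_lt hki hii).mp hbk_lt
  have : b k ≤ b (i - 1) := hbmono.monotoneOn hki hi1m (by omega)
  have hub : u = b k := le_antisymm hlt (by omega)
  exact hu (hub ▸ hkT)

/-- Reachability from equal cfun values. -/
lemma reach_of_cfun_eq (ht : 1 ≤ t) (hb0 : b 0 = 1) (hbt : b t = n)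
    (hbmono : StrictMonoOn b (Set.Icc 0 t))
    (hadj : ∀ u v : ℕ, G.Adj u v ↔
      u ≠ v ∧ ∃ i ∈ Set.Icc 1 t,
        u ∈ Set.Icc (b (i - 1)) (b i) ∧ v ∈ Set.Icc (b (i - 1)) (b i))
    (T : Set ℕ) :
    ∀ d x y (hx : x ∈ Set.Icc 1 n \ T) (hy : y ∈ Set.Icc 1 n \ T),
      x ≤ y → y - x ≤ d → cfun t b T x = cfun t b T y →
      (G.induce (Set.Icc 1 n \ T)).Reachable ⟨x, hx⟩ ⟨y, hy⟩ := by
  intro d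
  induction d with
  | zero =>
    intro x y hx hy hxy hd _
    have : x = y := by omega
    subst this
    exact SimpleGraph.Reachable.refl _
  | succ d ih =>
    intro x y hx hy hxy hd hc
    rcases eq_or_lt_of_le hxy with rfl | hlt
    · exact SimpleGraph.Reachable.refl _
    by_cases hcl : ∃ i ∈ Set.Icc 1 t, b (i-1) ≤ x ∧ y ≤ b i
    · obtain ⟨i, hi, h1, h2⟩ := hcl
      refine SimpleGraph.Adj.reachable ?_
      show G.Adj x y
      rw [hadj]
      exact ⟨by omega, i, hi, ⟨h1, le_trans (le_of_lt hlt) h2⟩, ⟨le_trans h1 hxy, h2⟩⟩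
    · -- find the greatest k with b k ≤ x
      set k := Nat.findGreatest (fun k => b k ≤ x) t with hk
      have hkP : b k ≤ x := by
        rw [hk]
        exact Nat.findGreatest_spec (P := fun i => b i ≤ x) (m := 0) (Nat.zero_le t)
          (by simpa [hb0] using hx.1.1)
      have hkle : k ≤ t := Nat.findGreatest_le t
      have hyn : y ≤ n := hy.1.2
      have hkt : k < t := by
        rcases lt_or_eq_of_le hkle with h | h
        · exact h
        · exfalso; rw [h, hbt] at hkP; omega
      have hfg : Nat.findGreatest (fun k => b k ≤ x) t < k + 1 := by omega
      have hnext : ¬ (b (k+1) ≤ x) :=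
        Nat.findGreatest_is_greatest (P := fun i => b i ≤ x) (k := k+1) hfg (by omega)
      push_neg at hnext
      have hyb : b (k+1) < y := by
        by_contra h
        push_neg at h
        exact hcl ⟨k+1, ⟨by omega, by omega⟩, by simpa using hkP, h⟩
      have hkt1 : k + 1 ≤ t - 1 := by
        by_contra h
        have : k + 1 = t := by omega
        rw [this, hbt] at hyb; omega
      set m := b (k+1) with hm
      have hmnT : m ∉ T := by
        intro hmT
        have := cfun_strict t b T hxy (by omega) hkt1 hmT (le_of_lt hnext) hyb
        omega
      have hm1 : 1 ≤ m := by
        have : b 0 < b (k+1) := hbmono ⟨le_refl _, by omega⟩ ⟨Nat.zero_le _, by omega⟩ (by omega)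
        rw [hb0] at this; omega
      have hmn : m ≤ n := by
        have : b (k+1) ≤ b t := hbmono.monotoneOn ⟨Nat.zero_le _, by omega⟩ ⟨Nat.zero_le _, le_refl _⟩ (by omega)
        omega
      have hmS : m ∈ Set.Icc 1 n \ T := ⟨⟨hm1, hmn⟩, hmnT⟩
      have hcm : cfun t b T x = cfun t b T m := by
        have h1 := cfun_mono t b T (x := x) (y := m) (by omega)
        have h2 := cfun_mono t b T (x := m) (y := y) (by omega)
        omega
      have r1 := ih x m hx hmS (by omega) (by omega) hcm
      have r2 := ih m y hmS hy (by omega) (by omega) (by omega)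
      exact r1.trans r2

end Master

section Count

variable {n t : ℕ} {G : SimpleGraph ℕ} {b : ℕ → ℕ}

open Classical in
theorem numComp_eq (ht : 1 ≤ t) (hb0 : b 0 = 1) (hbt : b t = n)
    (hbmono : StrictMonoOn b (Set.Icc 0 t))
    (hadj : ∀ u v : ℕ, G.Adj u v ↔
      u ≠ v ∧ ∃ i ∈ Set.Icc 1 t,
        u ∈ Set.Icc (b (i - 1)) (b i) ∧ v ∈ Set.Icc (b (i - 1)) (b i))
    (T : Set ℕ) :
    numComponents G (Set.Icc 1 n \ T)
      = (((Finset.Icc 1 n).filter (fun x => x ∉ T)).image (cfun t b T)).card := by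
  classical
  set S : Set ℕ := Set.Icc 1 n \ T with hS
  set img := ((Finset.Icc 1 n).filter (fun x => x ∉ T)).image (cfun t b T) with himg
  -- invariance of cfun along edges
  have hinv : ∀ (u v : S), (G.induce S).Adj u v → cfun t b T u.1 = cfun t b T v.1 := by
    rintro ⟨u, hu⟩ ⟨v, hv⟩ h
    have hG : G.Adj u v := h
    rw [hadj] at hG
    obtain ⟨hne, i, hi, ⟨hu1, hu2⟩, ⟨hv1, hv2⟩⟩ := hG
    rcases le_total u v with huv | hvu
    · exact clique_cfun_eq ht hbmono T hu.2 huv hi hu1 hv2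
    · exact (clique_cfun_eq ht hbmono T hv.2 hvu hi hv1 hu2).symm
  have hwalk : ∀ (u v : S), (G.induce S).Walk u v → cfun t b T u.1 = cfun t b T v.1 := by
    intro u v p
    induction p with
    | nil => rfl
    | cons ha p ih => exact (hinv _ _ ha).trans ih
  -- the lifted function
  set F : (G.induce S).ConnectedComponent → ℕ :=
    Quot.lift (fun v : S => cfun t b T v.1)
      (fun u v h => hwalk u v h.some) with hF
  have hFmk : ∀ v : S, F ((G.induce S).connectedComponentMk v) = cfun t b T v.1 := fun v => rfl
  have hmemS : ∀ x, x ∈ S ↔ (x ∈ Finset.Icc 1 n ∧ x ∉ T) := by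
    intro x
    simp [hS, Set.mem_diff, Set.mem_Icc, Finset.mem_Icc]
  have hFmem : ∀ c, F c ∈ img := by
    refine SimpleGraph.ConnectedComponent.ind ?_
    intro v
    rw [hFmk]
    apply Finset.mem_image_of_mem
    rw [Finset.mem_filter]
    exact ⟨((hmemS v.1).mp v.2).1, ((hmemS v.1).mp v.2).2⟩
  set F' : (G.induce S).ConnectedComponent → {m // m ∈ img} := fun c => ⟨F c, hFmem c⟩ with hF'
  have hbij : Function.Bijective F' := by
    constructor
    · refine SimpleGraph.ConnectedComponent.ind₂ ?_
      intro u v h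
      have hc : cfun t b T u.1 = cfun t b T v.1 := by
        have := congrArg Subtype.val h
        simpa [hF', hFmk] using this
      apply SimpleGraph.ConnectedComponent.sound
      rcases le_total u.1 v.1 with huv | hvu
      · have := reach_of_cfun_eq ht hb0 hbt hbmono hadj T (v.1 - u.1) u.1 v.1 u.2 v.2 huv le_rfl hc
        convert this
      · have := reach_of_cfun_eq ht hb0 hbt hbmono hadj T (u.1 - v.1) v.1 u.1 v.2 u.2 hvu le_rfl hc.symm
        refine SimpleGraph.Reachable.symm ?_
        convert this
    · rintro ⟨m, hm⟩
      rw [himg, Finset.mem_image] at hm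
      obtain ⟨x, hx, hxm⟩ := hm
      rw [Finset.mem_filter] at hx
      have hxS : x ∈ S := (hmemS x).mpr ⟨hx.1, hx.2⟩
      exact ⟨(G.induce S).connectedComponentMk ⟨x, hxS⟩, Subtype.ext (by simpa [hF', hFmk] using hxm)⟩
  have : numComponents G S = Nat.card {m // m ∈ img} := Nat.card_congr (Equiv.ofBijective F' hbij)
  rw [this, Nat.card_eq_finsetCard]

end Count

section Image

variable {n t s : ℕ} {b j : ℕ → ℕ}

lemma cfun_image (ht : 1 ≤ t)
    (hbmono : StrictMonoOn b (Set.Icc 0 t))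
    (hj : ∀ i ∈ Set.Icc 1 s, 1 ≤ j i ∧ j i ≤ t - 1)
    (hjmono : StrictMonoOn j (Set.Icc 1 s))
    (A : Set ℕ) (hA : A ⊆ Set.Icc 1 s) (x : ℕ) :
    cfun t b ((fun i => b (j i)) '' A) x
      = ((Finset.Icc 1 s).filter (fun k => k ∈ A ∧ b (j k) < x)).card := by
  classical
  have hjmem : ∀ k ∈ Set.Icc 1 s, j k ∈ Set.Icc 0 t := by
    intro k hk
    obtain ⟨h1, h2⟩ := hj k hk
    exact ⟨Nat.zero_le _, by omega⟩
  have hkey : (Finset.Icc 1 (t-1)).filter (fun i => b i ∈ ((fun i => b (j i)) '' A) ∧ b i < x)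
      = ((Finset.Icc 1 s).filter (fun k => k ∈ A ∧ b (j k) < x)).image j := by
    ext i
    rw [cfun_filter_mem]
    simp only [Finset.mem_image, Finset.mem_filter, Finset.mem_Icc, Set.mem_image]
    constructor
    · rintro ⟨⟨hi1, hi2⟩, ⟨k, hkA, hbk⟩, hix⟩
      have hks : k ∈ Set.Icc 1 s := hA hkA
      have hjki : j k = i := by
        apply hbmono.injOn (hjmem k hks) ⟨Nat.zero_le _, by omega⟩ hbk
      refine ⟨k, ⟨⟨hks.1, hks.2⟩, hkA, ?_⟩, hjki⟩
      rw [hjki]; exact hbk ▸ hix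
    · rintro ⟨k, ⟨⟨hk1, hk2⟩, hkA, hbk⟩, rfl⟩
      obtain ⟨h1, h2⟩ := hj k ⟨hk1, hk2⟩
      exact ⟨⟨h1, h2⟩, ⟨k, hkA, rfl⟩, hbk⟩
  rw [cfun, hkey]
  apply Finset.card_image_of_injOn
  intro a ha a' ha' haa
  rw [Finset.mem_coe, Finset.mem_filter, Finset.mem_Icc] at ha ha'
  exact hjmono.injOn ⟨ha.1.1, ha.1.2⟩ ⟨ha'.1.1, ha'.1.2⟩ haa

end Image

lemma image_diff_singleton {s : ℕ} {b j : ℕ → ℕ}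
    (hbj : ∀ k ∈ Set.Icc 1 s, ∀ l ∈ Set.Icc 1 s, k < l → b (j k) < b (j l))
    {k0 : ℕ} (hk0 : k0 ∈ Set.Icc 1 s) :
    ((fun i => b (j i)) '' Set.Icc 1 s) \ {b (j k0)}
      = (fun i => b (j i)) '' (Set.Icc 1 s \ {k0}) := by
  ext x
  simp only [Set.mem_diff, Set.mem_image, Set.mem_singleton_iff]
  constructor
  · rintro ⟨⟨k, hk, rfl⟩, hne⟩
    exact ⟨k, ⟨hk, fun h => hne (by rw [h])⟩, rfl⟩
  · rintro ⟨k, ⟨hk, hkne⟩, rfl⟩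
    refine ⟨⟨k, hk, rfl⟩, ?_⟩
    rcases lt_trichotomy k k0 with h | h | h
    · exact ne_of_lt (hbj k hk k0 hk0 h)
    · exact absurd h hkne
    · exact ne_of_gt (hbj k0 hk0 k hk h)

lemma cfun_image_Icc {t s : ℕ} {b j : ℕ → ℕ} (ht : 1 ≤ t)
    (hbmono : StrictMonoOn b (Set.Icc 0 t))
    (hj : ∀ i ∈ Set.Icc 1 s, 1 ≤ j i ∧ j i ≤ t - 1)
    (hjmono : StrictMonoOn j (Set.Icc 1 s)) (x : ℕ) :
    cfun t b ((fun i => b (j i)) '' Set.Icc 1 s) x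
      = ((Finset.Icc 1 s).filter (fun k => b (j k) < x)).card := by
  rw [cfun_image ht hbmono hj hjmono (Set.Icc 1 s) subset_rfl x]
  refine congrArg Finset.card (Finset.ext fun k => ?_)
  simp only [Finset.mem_filter, Finset.mem_Icc, Set.mem_Icc]
  tauto

lemma cfun_image_diff {t s : ℕ} {b j : ℕ → ℕ} (ht : 1 ≤ t)
    (hbmono : StrictMonoOn b (Set.Icc 0 t))
    (hj : ∀ i ∈ Set.Icc 1 s, 1 ≤ j i ∧ j i ≤ t - 1)
    (hjmono : StrictMonoOn j (Set.Icc 1 s))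
    (hbj : ∀ k ∈ Set.Icc 1 s, ∀ l ∈ Set.Icc 1 s, k < l → b (j k) < b (j l))
    {k0 : ℕ} (hk0 : k0 ∈ Set.Icc 1 s) (x : ℕ) :
    cfun t b (((fun i => b (j i)) '' Set.Icc 1 s) \ {b (j k0)}) x
      = ((Finset.Icc 1 s).filter (fun k => k ≠ k0 ∧ b (j k) < x)).card := by
  rw [image_diff_singleton hbj hk0,
    cfun_image ht hbmono hj hjmono _ Set.diff_subset x]
  refine congrArg Finset.card (Finset.ext fun k => ?_)
  simp only [Finset.mem_filter, Finset.mem_Icc, Set.mem_diff, Set.mem_Icc,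
    Set.mem_singleton_iff]
  tauto

/-- For a connected Cohen–Macaulay closed graph `G` with maximal cliques the
consecutive intervals `[b (i-1), b i]`, `i = 1,…,t` (`b 0 = 1`, `b t = n`):
every cut set is contained in the set of cut vertices `{b 1, …, b (t-1)}`, and
a non-empty subset `T = {b (j 1) < ⋯ < b (j s)}` of the cut vertices is a cut set
iff `b (j i) + 2 ≤ b (j (i+1))` for all `i ∈ [s-1]`. -/
theorem cutSets_of_CM_closed_graph
    (n t : ℕ) (ht : 1 ≤ t) (G : SimpleGraph ℕ)
    (b : ℕ → ℕ) (hb0 : b 0 = 1) (hbt : b t = n)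
    (hbmono : StrictMonoOn b (Set.Icc 0 t))
    (hadj : ∀ u v : ℕ, G.Adj u v ↔
      u ≠ v ∧ ∃ i ∈ Set.Icc 1 t,
        u ∈ Set.Icc (b (i - 1)) (b i) ∧ v ∈ Set.Icc (b (i - 1)) (b i)) :
    (∀ T : Set ℕ, IsCutSet n G T → T ⊆ b '' Set.Icc 1 (t - 1)) ∧
    (∀ s : ℕ, 1 ≤ s → ∀ j : ℕ → ℕ,
      (∀ i ∈ Set.Icc 1 s, 1 ≤ j i ∧ j i ≤ t - 1) →
      StrictMonoOn j (Set.Icc 1 s) →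
      (IsCutSet n G ((fun i => b (j i)) '' Set.Icc 1 s) ↔
        ∀ i : ℕ, 1 ≤ i → i ≤ s - 1 → b (j i) + 2 ≤ b (j (i + 1)))) := by
  have hn2 : 2 ≤ n := by
    have := hbmono (Set.mem_Icc.mpr ⟨le_rfl, Nat.zero_le t⟩)
      (Set.mem_Icc.mpr ⟨Nat.zero_le t, le_rfl⟩) ht
    omega
  constructor
  · -- Part 1: every cut set consists of cut vertices
    rintro T ⟨hT1, hT2⟩ v hv
    by_contra hvim
    have hlt := hT2 v hv
    rw [numComp_eq ht hb0 hbt hbmono hadj T,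
        numComp_eq ht hb0 hbt hbmono hadj (T \ {v})] at hlt
    have hceq : ∀ x, cfun t b (T \ {v}) x = cfun t b T x := by
      intro x
      unfold cfun
      refine congrArg Finset.card (Finset.ext fun i => ?_)
      simp only [Finset.mem_filter, Finset.mem_Icc, Set.mem_diff, Set.mem_singleton_iff]
      constructor
      · rintro ⟨h1, ⟨h2, _⟩, h3⟩
        exact ⟨h1, h2, h3⟩
      · rintro ⟨h1, h2, h3⟩
        refine ⟨h1, ⟨h2, ?_⟩, h3⟩
        intro h
        exact hvim ⟨i, Set.mem_Icc.mpr ⟨h1.1, h1.2⟩, h⟩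
    refine absurd hlt (not_lt.mpr (Finset.card_le_card ?_))
    intro m hm
    rw [Finset.mem_image] at hm ⊢
    obtain ⟨x, hx, hxm⟩ := hm
    rw [Finset.mem_filter] at hx
    refine ⟨x, ?_, by rw [hceq]; exact hxm⟩
    simp only [Finset.mem_filter]
    exact ⟨hx.1, fun h => hx.2 h.1⟩
  · -- Part 2
    intro s hs j hj hjmono
    set T : Set ℕ := (fun i => b (j i)) '' Set.Icc 1 s with hT
    have hjmem : ∀ k ∈ Set.Icc 1 s, j k ∈ Set.Icc 0 t := by
      intro k hk
      have := hj k hk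
      exact Set.mem_Icc.mpr ⟨Nat.zero_le _, by omega⟩
    have hbj : ∀ k ∈ Set.Icc 1 s, ∀ l ∈ Set.Icc 1 s, k < l → b (j k) < b (j l) :=
      fun k hk l hl hkl => hbmono (hjmem k hk) (hjmem l hl) (hjmono hk hl hkl)
    have hbjle : ∀ k ∈ Set.Icc 1 s, ∀ l ∈ Set.Icc 1 s, k ≤ l → b (j k) ≤ b (j l) := by
      intro k hk l hl hkl
      rcases eq_or_lt_of_le hkl with rfl | h
      · exact le_rfl
      · exact (hbj k hk l hl h).le
    have hbnd : ∀ k ∈ Set.Icc 1 s, 2 ≤ b (j k) ∧ b (j k) < n := by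
      intro k hk
      have hjk := hj k hk
      have h1 : b 0 < b (j k) :=
        hbmono (Set.mem_Icc.mpr ⟨le_rfl, Nat.zero_le t⟩) (hjmem k hk) (by omega)
      have h2 : b (j k) < b t :=
        hbmono (hjmem k hk) (Set.mem_Icc.mpr ⟨Nat.zero_le t, le_rfl⟩) (by omega)
      rw [hb0] at h1
      rw [hbt] at h2
      omega
    have hTsub : T ⊆ Set.Icc 1 n := by
      rintro x hx
      rw [hT, Set.mem_image] at hx
      obtain ⟨k, hk, hkx⟩ := hx
      have hkx' : b (j k) = x := hkx
      have := hbnd k hk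
      exact Set.mem_Icc.mpr ⟨by omega, by omega⟩
    have hcT : ∀ x, cfun t b T x
        = ((Finset.Icc 1 s).filter (fun k => b (j k) < x)).card :=
      fun x => cfun_image_Icc ht hbmono hj hjmono x
    -- claims about values of cfun
    have claimA : ∀ i ∈ Set.Icc 1 s, ∀ x, b (j i) < x → i ≤ cfun t b T x := by
      intro i hi x hx
      rw [hcT]
      have hsub : Finset.Icc 1 i ⊆ (Finset.Icc 1 s).filter (fun k => b (j k) < x) := by
        intro k hk
        rw [Finset.mem_Icc] at hk
        have hks : k ∈ Set.Icc 1 s := Set.mem_Icc.mpr ⟨hk.1, le_trans hk.2 hi.2⟩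
        rw [Finset.mem_filter, Finset.mem_Icc]
        exact ⟨⟨hk.1, le_trans hk.2 hi.2⟩, lt_of_le_of_lt (hbjle k hks i hi hk.2) hx⟩
      have := Finset.card_le_card hsub
      rw [Nat.card_Icc] at this
      omega
    have claimB : ∀ i ∈ Set.Icc 1 s, ∀ x, x ≤ b (j i) → cfun t b T x ≤ i - 1 := by
      intro i hi x hx
      rw [hcT]
      have hsub : (Finset.Icc 1 s).filter (fun k => b (j k) < x) ⊆ Finset.Icc 1 (i - 1) := by
        intro k hk
        rw [Finset.mem_filter, Finset.mem_Icc] at hk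
        obtain ⟨⟨hk1, hk2⟩, hbk⟩ := hk
        rw [Finset.mem_Icc]
        refine ⟨hk1, ?_⟩
        by_contra hki
        push_neg at hki
        have : b (j i) ≤ b (j k) := hbjle i hi k (Set.mem_Icc.mpr ⟨hk1, hk2⟩) (by omega)
        omega
      have := Finset.card_le_card hsub
      rw [Nat.card_Icc] at this
      omega
    constructor
    · -- cut set → gaps
      rintro ⟨hT1, hT2⟩ i hi1 hi2
      by_contra hg
      push_neg at hg
      have his : i ∈ Set.Icc 1 s := Set.mem_Icc.mpr ⟨hi1, by omega⟩
      have hi1s : i + 1 ∈ Set.Icc 1 s := Set.mem_Icc.mpr ⟨by omega, by omega⟩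
      have hk1 : b (j (i+1)) = b (j i) + 1 := by
        have := hbj i his (i+1) hi1s (by omega)
        omega
      have hvT : b (j i) ∈ T := ⟨i, his, rfl⟩
      have hlt := hT2 (b (j i)) hvT
      rw [numComp_eq ht hb0 hbt hbmono hadj T,
          numComp_eq ht hb0 hbt hbmono hadj (T \ {b (j i)})] at hlt
      have hcT' : ∀ x, cfun t b (T \ {b (j i)}) x
          = ((Finset.Icc 1 s).filter (fun k => k ≠ i ∧ b (j k) < x)).card :=
        fun x => cfun_image_diff ht hbmono hj hjmono hbj his x
      -- i is not a value of cfun on the complement of T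
      have hiA : ∀ x, x ∉ T → cfun t b T x ≠ i := by
        intro x hxT hcx
        have h1 : b (j i) < x := by
          by_contra h
          push_neg at h
          have := claimB i his x h
          omega
        have h2 : ¬ b (j (i+1)) < x := by
          intro h
          have := claimA (i+1) hi1s x h
          omega
        have hxeq : x = b (j (i+1)) := by omega
        exact hxT ⟨i+1, hi1s, hxeq.symm⟩
      refine absurd hlt (not_lt.mpr
        (Finset.card_le_card_of_injOn (fun m => if m < i then m else m - 1) ?_ ?_))
      · -- the map sends values of cfun on the complement of T to values for T minus v
        intro m hm
        rw [Finset.mem_coe, Finset.mem_image] at hm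
        obtain ⟨x, hx, hxm⟩ := hm
        rw [Finset.mem_filter] at hx
        rw [Finset.mem_coe, Finset.mem_image]
        refine ⟨x, ?_, ?_⟩
        · simp only [Finset.mem_filter]
          exact ⟨hx.1, fun h => hx.2 h.1⟩
        show cfun t b (T \ {b (j i)}) x = if m < i then m else m - 1
        by_cases hbix : b (j i) < x
        · -- m > i, the value drops by one
          have hge := claimA i his x hbix
          have hne := hiA x hx.2
          rw [hxm] at hge hne
          rw [if_neg (by omega)]
          rw [hcT']
          have herase : (Finset.Icc 1 s).filter (fun k => k ≠ i ∧ b (j k) < x)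
              = ((Finset.Icc 1 s).filter (fun k => b (j k) < x)).erase i := by
            ext k
            simp only [Finset.mem_erase, Finset.mem_filter, Finset.mem_Icc]
            tauto
          rw [herase, Finset.card_erase_of_mem, ← hcT, hxm]
          rw [Finset.mem_filter, Finset.mem_Icc]
          exact ⟨⟨his.1, his.2⟩, hbix⟩
        · -- m < i, the value is unchanged
          push_neg at hbix
          have hle := claimB i his x hbix
          rw [hxm] at hle
          rw [if_pos (by omega)]
          rw [hcT']
          have heq : (Finset.Icc 1 s).filter (fun k => k ≠ i ∧ b (j k) < x)
              = (Finset.Icc 1 s).filter (fun k => b (j k) < x) := by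
            ext k
            simp only [Finset.mem_filter, Finset.mem_Icc]
            constructor
            · rintro ⟨h1, _, h3⟩
              exact ⟨h1, h3⟩
            · rintro ⟨h1, h3⟩
              refine ⟨h1, ?_, h3⟩
              rintro rfl
              omega
          rw [heq, ← hcT, hxm]
      · -- injectivity of the map on the image
        intro m1 hm1 m2 hm2 heq
        rw [Finset.mem_coe, Finset.mem_image] at hm1 hm2
        obtain ⟨x1, hx1, hxm1⟩ := hm1
        obtain ⟨x2, hx2, hxm2⟩ := hm2
        rw [Finset.mem_filter] at hx1 hx2
        have h1 : m1 ≠ i := hxm1 ▸ hiA x1 hx1.2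
        have h2 : m2 ≠ i := hxm2 ▸ hiA x2 hx2.2
        simp only at heq
        split_ifs at heq <;> omega
    · -- gaps → cut set
      intro hgap
      refine ⟨hTsub, ?_⟩
      intro v hv
      rw [hT, Set.mem_image] at hv
      obtain ⟨k0, hk0, rfl⟩ := hv
      show numComponents G (Set.Icc 1 n \ (T \ {b (j k0)})) < numComponents G (Set.Icc 1 n \ T)
      rw [numComp_eq ht hb0 hbt hbmono hadj T,
          numComp_eq ht hb0 hbt hbmono hadj (T \ {b (j k0)})]
      -- bound for the deleted-vertex side
      have hbound : ∀ x, cfun t b (T \ {b (j k0)}) x ≤ s - 1 := by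
        intro x
        rw [cfun_image_diff ht hbmono hj hjmono hbj hk0 x]
        have hsub : (Finset.Icc 1 s).filter (fun k => k ≠ k0 ∧ b (j k) < x)
            ⊆ (Finset.Icc 1 s).erase k0 := by
          intro k hk
          rw [Finset.mem_filter] at hk
          rw [Finset.mem_erase]
          exact ⟨hk.2.1, hk.1⟩
        have := Finset.card_le_card hsub
        rw [Finset.card_erase_of_mem (Finset.mem_Icc.mpr (Set.mem_Icc.mp hk0)),
          Nat.card_Icc] at this
        omega
      refine lt_of_le_of_lt (b := s) ?_ ?_
      · -- the deleted-vertex image has at most s elements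
        refine le_trans (Finset.card_le_card (t := Finset.Icc 0 (s-1)) ?_) ?_
        · intro m hm
          rw [Finset.mem_image] at hm
          obtain ⟨x, _, hxm⟩ := hm
          rw [Finset.mem_Icc]
          exact ⟨Nat.zero_le _, hxm ▸ hbound x⟩
        · rw [Nat.card_Icc]
          omega
      · -- the full image contains Icc 0 s, which has s+1 elements
        refine lt_of_lt_of_le (b := (Finset.Icc 0 s).card) ?_ (Finset.card_le_card ?_)
        · rw [Nat.card_Icc]
          omega
        · intro m hm
          rw [Finset.mem_Icc] at hm
          rw [Finset.mem_image]
          rcases Nat.eq_zero_or_pos m with rfl | hm1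
          · refine ⟨1, ?_, ?_⟩
            · rw [Finset.mem_filter, Finset.mem_Icc]
              refine ⟨⟨le_rfl, by omega⟩, ?_⟩
              intro hx
              rw [hT, Set.mem_image] at hx
              obtain ⟨k, hk, hkx⟩ := hx
              have hkx' : b (j k) = 1 := hkx
              have := hbnd k hk
              omega
            · rw [hcT]
              rw [Finset.card_eq_zero, Finset.filter_eq_empty_iff]
              intro k hk
              rw [Finset.mem_Icc] at hk
              have := hbnd k (Set.mem_Icc.mpr hk)
              omega
          · have hms : m ∈ Set.Icc 1 s := Set.mem_Icc.mpr ⟨hm1, hm.2⟩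
            have hbm := hbnd m hms
            refine ⟨b (j m) + 1, ?_, ?_⟩
            · rw [Finset.mem_filter, Finset.mem_Icc]
              refine ⟨⟨by omega, by omega⟩, ?_⟩
              intro hx
              rw [hT, Set.mem_image] at hx
              obtain ⟨k, hk, hkx⟩ := hx
              have hkx' : b (j k) = b (j m) + 1 := hkx
              rcases le_or_gt k m with h | h
              · have := hbjle k hk m hms h
                omega
              · have hkk := Set.mem_Icc.mp hk
                have hm1s : m + 1 ∈ Set.Icc 1 s := Set.mem_Icc.mpr ⟨by omega, by omega⟩
                have h1 := hbjle (m+1) hm1s k hk (by omega)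
                have h2 := hgap m hm1 (by omega)
                omega
            · rw [hcT]
              have hfe : (Finset.Icc 1 s).filter (fun k => b (j k) < b (j m) + 1)
                  = Finset.Icc 1 m := by
                ext k
                simp only [Finset.mem_filter, Finset.mem_Icc]
                constructor
                · rintro ⟨⟨hk1, hk2⟩, hbk⟩
                  refine ⟨hk1, ?_⟩
                  by_contra hkm
                  push_neg at hkm
                  have := hbj m hms k (Set.mem_Icc.mpr ⟨hk1, hk2⟩) hkm
                  omega
                · rintro ⟨hk1, hk2⟩
                  have hks : k ∈ Set.Icc 1 s := Set.mem_Icc.mpr ⟨hk1, by omega⟩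
                  have := hbjle k hks m hms hk2
                  exact ⟨⟨hk1, by omega⟩, by omega⟩
              rw [hfe, Nat.card_Icc]
              omega
end

section
/- Let I ⊂ K[x_1,…,x_N] be a monomial complete intersection ideal generated by monomials u_1, …, u_r forming a regular sequence, and let k ≥ 1. Then for any product u_{e_1} ⋯ u_{e_{k−1}} of k−1 of the generators (with repetition allowed), the colon ideal (I^k : u_{e_1} ⋯ u_{e_{k−1}}) equals I. -/
open MvPolynomial Finset

section Aux

variable {σ K : Type*} [Field K]

lemma aux_prod_monomial (n : ℕ) (f : ℕ → (σ →₀ ℕ)) :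
    ∏ t ∈ Finset.range n, (monomial (f t) (1 : K)) =
      monomial (∑ t ∈ Finset.range n, f t) 1 := by
  induction n with
  | zero => simp
  | succ n ih => rw [Finset.prod_range_succ, Finset.sum_range_succ, ih, monomial_mul, one_mul]

lemma aux_prod_mem_pow {R : Type*} [CommRing R] (I : Ideal R) (n : ℕ) (f : ℕ → R)
    (hf : ∀ t, f t ∈ I) : ∏ t ∈ Finset.range n, f t ∈ I ^ n := by
  induction n with
  | zero => simp
  | succ n ih =>
    rw [Finset.prod_range_succ, pow_succ]
    exact Ideal.mul_mem_mul ih (hf n)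

lemma aux_span_pow (r : ℕ) (d : Fin r → (σ →₀ ℕ)) (k : ℕ) :
    (Ideal.span (Set.range fun i : Fin r => (monomial (d i) (1 : K)))) ^ k
      = Ideal.span ((fun s => (monomial s (1 : K))) ''
          Set.range (fun g : Fin k → Fin r => ∑ t, d (g t))) := by
  induction k with
  | zero =>
    simp only [pow_zero]
    have : Set.range (fun g : Fin 0 → Fin r => ∑ t, d (g t)) = {0} := by
      ext x
      constructor
      · rintro ⟨g, rfl⟩; simp
      · rintro rfl; exact ⟨Fin.elim0, by simp⟩
    rw [this]
    simp [Ideal.span_singleton_one]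
  | succ k ih =>
    rw [pow_succ, ih, Ideal.span_mul_span']
    congr 1
    ext p
    constructor
    · intro hp
      rw [Set.mem_mul] at hp
      obtain ⟨aa, ha, bb, hb, rfl⟩ := hp
      obtain ⟨s, ⟨g, rfl⟩, rfl⟩ := ha
      obtain ⟨i, rfl⟩ := hb
      refine ⟨_, ⟨Fin.snoc g i, rfl⟩, ?_⟩
      simp [Fin.sum_univ_castSucc]
    · rintro ⟨_, ⟨g, rfl⟩, rfl⟩
      rw [Set.mem_mul]
      refine ⟨monomial (∑ t, d (Fin.init g t)) 1, ⟨_, ⟨Fin.init g, rfl⟩, rfl⟩,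
        monomial (d (g (Fin.last k))) 1, ⟨g (Fin.last k), rfl⟩, ?_⟩
      simp [Fin.sum_univ_castSucc, Fin.init]

lemma aux_key (r k : ℕ) (hk : 1 ≤ k) (d : Fin r → (σ →₀ ℕ))
    (hdisj : ∀ i j : Fin r, i ≠ j → Disjoint (d i).support (d j).support)
    (g : Fin k → Fin r) (e : ℕ → Fin r) (m : σ →₀ ℕ)
    (h : ∑ t, d (g t) ≤ (∑ t ∈ Finset.range (k - 1), d (e t)) + m) :
    ∃ i, d i ≤ m := by
  classical
  set a : Fin r → ℕ := fun i => (Finset.univ.filter (fun t => g t = i)).card with ha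
  set b : Fin r → ℕ := fun i => ((Finset.range (k - 1)).filter (fun t => e t = i)).card with hb
  have hsa : ∑ i, a i = k := by
    have := (Finset.card_eq_sum_card_fiberwise
      (s := (Finset.univ : Finset (Fin k))) (t := Finset.univ) (f := g)
      (fun t _ => Finset.mem_univ (g t)))
    simpa [ha] using this.symm
  have hsb : ∑ i, b i = k - 1 := by
    have := (Finset.card_eq_sum_card_fiberwise
      (s := Finset.range (k - 1)) (t := Finset.univ) (f := e)
      (fun t _ => Finset.mem_univ (e t)))
    simpa [hb] using this.symm
  have hex : ∃ i, b i < a i := by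
    by_contra hc
    push_neg at hc
    have : ∑ i, a i ≤ ∑ i, b i := Finset.sum_le_sum fun i _ => hc i
    omega
  obtain ⟨i, hi⟩ := hex
  refine ⟨i, (Finsupp.le_iff _ _).2 fun x hx => ?_⟩
  have hsum : ∀ (n : ℕ) (f : ℕ → Fin r),
      (∑ t ∈ Finset.range n, d (f t)) x
        = ((Finset.range n).filter (fun t => f t = i)).card * (d i) x := by
    intro n f
    rw [Finsupp.finset_sum_apply]
    rw [← Finset.sum_filter_add_sum_filter_not (Finset.range n) (fun t => f t = i)]
    have h1 : ∑ t ∈ (Finset.range n).filter (fun t => f t = i), (d (f t)) x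
        = ((Finset.range n).filter (fun t => f t = i)).card * (d i) x := by
      rw [Finset.sum_congr rfl (fun t ht => by
        rw [(Finset.mem_filter.1 ht).2]), Finset.sum_const, smul_eq_mul]
    have h2 : ∑ t ∈ (Finset.range n).filter (fun t => ¬ f t = i), (d (f t)) x = 0 := by
      refine Finset.sum_eq_zero fun t ht => ?_
      have hne := (Finset.mem_filter.1 ht).2
      by_contra hz
      have hxm : x ∈ (d (f t)).support := Finsupp.mem_support_iff.2 hz
      exact (Finset.disjoint_left.1 (hdisj (f t) i hne)) hxm hx
    rw [h1, h2, add_zero]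
  have hsum' : (∑ t, d (g t)) x = a i * (d i) x := by
    rw [Finsupp.finset_sum_apply]
    rw [← Finset.sum_filter_add_sum_filter_not Finset.univ (fun t => g t = i)]
    have h1 : ∑ t ∈ Finset.univ.filter (fun t => g t = i), (d (g t)) x
        = (Finset.univ.filter (fun t => g t = i)).card * (d i) x := by
      rw [Finset.sum_congr rfl (fun t ht => by
        rw [(Finset.mem_filter.1 ht).2]), Finset.sum_const, smul_eq_mul]
    have h2 : ∑ t ∈ Finset.univ.filter (fun t => ¬ g t = i), (d (g t)) x = 0 := by
      refine Finset.sum_eq_zero fun t ht => ?_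
      have hne := (Finset.mem_filter.1 ht).2
      by_contra hz
      have hxm : x ∈ (d (g t)).support := Finsupp.mem_support_iff.2 hz
      exact (Finset.disjoint_left.1 (hdisj (g t) i hne)) hxm hx
    rw [h1, h2, add_zero]
  have hx1 := h x
  rw [Finsupp.add_apply, hsum (k - 1) e, hsum'] at hx1
  have hdx : 0 < (d i) x := Nat.pos_of_ne_zero (Finsupp.mem_support_iff.1 hx)
  nlinarith [hx1, hi, hdx]

end Aux

/-- For a monomial complete intersection `I = (u_1, …, u_r)` (monomials with pairwise
disjoint supports, i.e. a regular sequence of non-unit monomials) and any product of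
`k - 1` of the generators (repetitions allowed), `(I^k : u_{e 1} ⋯ u_{e (k-1)}) = I`. -/
theorem colon_pow_monomial_CI
    (σ : Type*) (K : Type*) [Field K] (r : ℕ)
    (d : Fin r → (σ →₀ ℕ))
    (hne : ∀ i : Fin r, d i ≠ 0)
    (hdisj : ∀ i j : Fin r, i ≠ j → Disjoint (d i).support (d j).support)
    (I : Ideal (MvPolynomial σ K))
    (hI : I = Ideal.span (Set.range fun i : Fin r => (monomial (d i) (1 : K))))
    (k : ℕ) (hk : 1 ≤ k) (e : ℕ → Fin r) :
    Submodule.colon (I ^ k)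
        (Ideal.span {∏ t ∈ Finset.range (k - 1), (monomial (d (e t)) (1 : K))}) = I := by
  subst hI
  set c : σ →₀ ℕ := ∑ t ∈ Finset.range (k - 1), d (e t) with hc
  have hu : ∏ t ∈ Finset.range (k - 1), (monomial (d (e t)) (1 : K)) = monomial c 1 :=
    aux_prod_monomial _ _
  rw [hu]
  apply le_antisymm
  · intro p hp
    rw [Ideal.mem_colon_span_singleton, aux_span_pow, mem_ideal_span_monomial_image] at hp
    have hrange : Set.range (fun i : Fin r => (monomial (d i) (1 : K)))
        = (fun s => monomial s (1 : K)) '' Set.range d := by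
      rw [← Set.range_comp]; rfl
    rw [hrange, mem_ideal_span_monomial_image]
    intro m hm
    have hcm : c + m ∈ (p * monomial c 1).support := by
      rw [MvPolynomial.mem_support_iff, mul_comm, coeff_monomial_mul, one_mul]
      exact MvPolynomial.mem_support_iff.1 hm
    obtain ⟨s, ⟨g, rfl⟩, hle⟩ := hp _ hcm
    obtain ⟨i, hi⟩ := aux_key r k hk d hdisj g e m hle
    exact ⟨d i, ⟨i, rfl⟩, hi⟩
  · intro p hp
    rw [Ideal.mem_colon_span_singleton]
    have hcmem : monomial c (1 : K) ∈
        (Ideal.span (Set.range fun i : Fin r => (monomial (d i) (1 : K)))) ^ (k - 1) := by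
      rw [← hu]
      exact aux_prod_mem_pow _ _ _ fun t => Ideal.subset_span ⟨e t, rfl⟩
    have hk' : (Ideal.span (Set.range fun i : Fin r => (monomial (d i) (1 : K)))) ^ k
        = (Ideal.span (Set.range fun i : Fin r => (monomial (d i) (1 : K)))) ^ (k - 1)
          * (Ideal.span (Set.range fun i : Fin r => (monomial (d i) (1 : K)))) := by
      rw [← pow_succ, Nat.sub_add_cancel hk]
    rw [hk', mul_comm p]
    exact Ideal.mul_mem_mul hcmem hp
end

section
/- Let G be a connected closed graph on [n] with maximal cliques F_i = [a_i, b_i], 1 = a_1 < ⋯ < a_t, b_t = n, and let W_i = F_i ∩ F_{i+1} = [a_{i+1}, b_i] be a connected cut set. Set ε = {a_{i+1} − 1, b_i + 1}. Then ε is a non-edge of G, every vertex of W_i is adjacent to both a_{i+1} − 1 and b_i + 1, and every path in G from a_{i+1} − 1 to b_i + 1 passes through some vertex of W_i. -/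
/-- For a connected closed graph `G` on `[1,n]` with maximal cliques the intervals
`[a i, b i]`, and `W_i = F_i ∩ F_{i+1} = [a (i+1), b i]`: the pair
`ε = {a (i+1) − 1, b i + 1}` is a non-edge of `G`, every vertex of `W_i` is adjacent to
both endpoints of `ε`, and every walk in `G` from `a (i+1) − 1` to `b i + 1` passes
through some vertex of `W_i`. -/
theorem nonedge_and_separation_of_connected_cutSet
    (n t : ℕ) (ht : 1 ≤ t) (G : SimpleGraph ℕ)
    (a b : ℕ → ℕ)
    (ha1 : a 1 = 1) (hbt : b t = n)
    (hab : ∀ i ∈ Set.Icc 1 t, a i ≤ b i)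
    (hamono : StrictMonoOn a (Set.Icc 1 t))
    (hbmono : StrictMonoOn b (Set.Icc 1 t))
    (hoverlap : ∀ i : ℕ, 1 ≤ i → i < t → a (i + 1) ≤ b i)
    (hadj : ∀ u v : ℕ, G.Adj u v ↔
      u ≠ v ∧ ∃ i ∈ Set.Icc 1 t, u ∈ Set.Icc (a i) (b i) ∧ v ∈ Set.Icc (a i) (b i))
    (i : ℕ) (hi1 : 1 ≤ i) (hit : i < t) :
    ¬ G.Adj (a (i + 1) - 1) (b i + 1) ∧
    (∀ w ∈ Set.Icc (a (i + 1)) (b i),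
      G.Adj w (a (i + 1) - 1) ∧ G.Adj w (b i + 1)) ∧
    (∀ p : G.Walk (a (i + 1) - 1) (b i + 1),
      ∃ w ∈ p.support, w ∈ Set.Icc (a (i + 1)) (b i)) := by
  have hiI : i ∈ Set.Icc 1 t := ⟨hi1, le_of_lt hit⟩
  have hi1I : i + 1 ∈ Set.Icc 1 t := ⟨by omega, by omega⟩
  have hov : a (i + 1) ≤ b i := hoverlap i hi1 hit
  have haa : a i < a (i + 1) := hamono hiI hi1I (by omega)
  have hbb : b i < b (i + 1) := hbmono hiI hi1I (by omega)
  have h1I : (1 : ℕ) ∈ Set.Icc 1 t := ⟨le_refl 1, ht⟩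
  have ha1pos : 1 ≤ a (i + 1) := by
    have := hamono.monotoneOn h1I hi1I (by omega)
    omega
  -- any neighbour of a vertex ≤ a(i+1)-1 lies ≤ b i
  have key1 : ∀ u v : ℕ, G.Adj u v → u ≤ a (i + 1) - 1 → v ≤ b i := by
    intro u v huv hu
    obtain ⟨hne, j, hjI, ⟨hju1, hju2⟩, ⟨hjv1, hjv2⟩⟩ := (hadj u v).1 huv
    have haj : a j < a (i + 1) := by omega
    have hji : j < i + 1 := (hamono.lt_iff_lt hjI hi1I).1 haj
    have : b j ≤ b i := hbmono.monotoneOn hjI hiI (by omega)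
    omega
  -- any neighbour of a vertex ≥ b i + 1 lies ≥ a (i+1)
  have key2 : ∀ u v : ℕ, G.Adj u v → b i + 1 ≤ v → a (i + 1) ≤ u := by
    intro u v huv hv
    obtain ⟨hne, j, hjI, ⟨hju1, hju2⟩, ⟨hjv1, hjv2⟩⟩ := (hadj u v).1 huv
    have hbj : b i < b j := by omega
    have hij : i < j := (hbmono.lt_iff_lt hiI hjI).1 hbj
    have : a (i + 1) ≤ a j := hamono.monotoneOn hi1I hjI (by omega)
    omega
  refine ⟨?_, ?_, ?_⟩
  · intro h
    have := key1 _ _ h (le_refl _)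
    omega
  · rintro w ⟨hw1, hw2⟩
    constructor
    · rw [hadj]
      refine ⟨by omega, i, hiI, ⟨by omega, hw2⟩, ⟨by omega, by omega⟩⟩
    · rw [hadj]
      refine ⟨by omega, i + 1, hi1I, ⟨hw1, by omega⟩, ⟨by omega, by omega⟩⟩
  · have aux : ∀ (u v : ℕ) (p : G.Walk u v), u ≤ b i → b i + 1 ≤ v →
        ∃ w ∈ p.support, w ∈ Set.Icc (a (i + 1)) (b i) := by
      intro u v p
      induction p with
      | nil => intro hu hv; omega
      | @cons u v _ h q ih =>
        intro hu hv'
        by_cases hv : v ≤ b i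
        · obtain ⟨w, hw, hwI⟩ := ih hv hv'
          exact ⟨w, by simp [SimpleGraph.Walk.support_cons, hw], hwI⟩
        · have := key2 u v h (by omega)
          exact ⟨u, by simp, Set.mem_Icc.2 ⟨this, hu⟩⟩
    intro p
    exact aux _ _ p (by omega) (by omega)
end

section
/- Let G be a connected closed graph on [n] with maximal cliques F_i = [a_i, b_i] as above, and let W_i = F_i ∩ F_{i+1}. Let v_1, v_2 be distinct neighbors of the vertex a_{i+1} − 1 in G with v_1, v_2 ∉ W_i. Then v_1, v_2 ≤ b_i and {v_1, v_2} ∈ E(G). Symmetrically, any two distinct neighbors of b_i + 1 not in W_i are adjacent in G. -/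
/-- For a connected closed graph `G` on `[1,n]` with maximal cliques the intervals
`[a i, b i]` and `W_i = [a (i+1), b i]`: any two distinct neighbors `v₁, v₂` of
`a (i+1) − 1` not lying in `W_i` satisfy `v₁, v₂ ≤ b i` and are adjacent; symmetrically,
any two distinct neighbors of `b i + 1` not in `W_i` are adjacent. -/
theorem neighbors_outside_cutSet_adjacent
    (n t : ℕ) (ht : 1 ≤ t) (G : SimpleGraph ℕ)
    (a b : ℕ → ℕ)
    (ha1 : a 1 = 1) (hbt : b t = n)
    (hab : ∀ i ∈ Set.Icc 1 t, a i ≤ b i)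
    (hamono : StrictMonoOn a (Set.Icc 1 t))
    (hbmono : StrictMonoOn b (Set.Icc 1 t))
    (hoverlap : ∀ i : ℕ, 1 ≤ i → i < t → a (i + 1) ≤ b i)
    (hadj : ∀ u v : ℕ, G.Adj u v ↔
      u ≠ v ∧ ∃ i ∈ Set.Icc 1 t, u ∈ Set.Icc (a i) (b i) ∧ v ∈ Set.Icc (a i) (b i))
    (i : ℕ) (hi1 : 1 ≤ i) (hit : i < t) :
    (∀ v₁ v₂ : ℕ, v₁ ≠ v₂ →
      G.Adj (a (i + 1) - 1) v₁ → G.Adj (a (i + 1) - 1) v₂ →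
      v₁ ∉ Set.Icc (a (i + 1)) (b i) → v₂ ∉ Set.Icc (a (i + 1)) (b i) →
      v₁ ≤ b i ∧ v₂ ≤ b i ∧ G.Adj v₁ v₂) ∧
    (∀ v₁ v₂ : ℕ, v₁ ≠ v₂ →
      G.Adj (b i + 1) v₁ → G.Adj (b i + 1) v₂ →
      v₁ ∉ Set.Icc (a (i + 1)) (b i) → v₂ ∉ Set.Icc (a (i + 1)) (b i) →
      G.Adj v₁ v₂) := by
  have hiIcc : i ∈ Set.Icc 1 t := ⟨hi1, hit.le⟩
  have hi1Icc : i + 1 ∈ Set.Icc 1 t := ⟨by omega, by omega⟩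
  have h2 : 1 < a (i + 1) := by
    have := hamono ⟨le_refl 1, ht⟩ hi1Icc (by omega)
    omega
  constructor
  · -- part 1
    have key1 : ∀ v, G.Adj (a (i + 1) - 1) v → v ∉ Set.Icc (a (i + 1)) (b i) →
        ∃ j, j ∈ Set.Icc 1 t ∧ (a (i + 1) - 1) ∈ Set.Icc (a j) (b j) ∧
          v ∈ Set.Icc (a j) (b j) ∧ v ≤ a (i + 1) - 1 := by
      intro v hv hnot
      obtain ⟨hne, j, hj, hxj, hvj⟩ := (hadj _ _).1 hv
      have hji : j ≤ i := by
        by_contra h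
        have h1 : a (i + 1) ≤ a j := hamono.monotoneOn hi1Icc hj (by omega)
        have := hxj.1
        omega
      have hbj : b j ≤ b i := hbmono.monotoneOn hj hiIcc hji
      have hvbi : v ≤ b i := le_trans hvj.2 hbj
      have hvlt : v ≤ a (i + 1) - 1 := by
        simp only [Set.mem_Icc, not_and, not_le] at hnot
        omega
      exact ⟨j, hj, hxj, hvj, hvlt⟩
    intro v₁ v₂ hne h1' h2' hn1 hn2
    obtain ⟨j₁, hj₁, hxj₁, hv₁, hle₁⟩ := key1 v₁ h1' hn1
    obtain ⟨j₂, hj₂, hxj₂, hv₂, hle₂⟩ := key1 v₂ h2' hn2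
    have hj₁i : j₁ ≤ i := by
      by_contra h
      have h1 : a (i + 1) ≤ a j₁ := hamono.monotoneOn hi1Icc hj₁ (by omega)
      have := hxj₁.1; omega
    have hj₂i : j₂ ≤ i := by
      by_contra h
      have h1 : a (i + 1) ≤ a j₂ := hamono.monotoneOn hi1Icc hj₂ (by omega)
      have := hxj₂.1; omega
    refine ⟨le_trans hv₁.2 (hbmono.monotoneOn hj₁ hiIcc hj₁i),
      le_trans hv₂.2 (hbmono.monotoneOn hj₂ hiIcc hj₂i), ?_⟩
    rcases le_total j₁ j₂ with hle | hle
    · refine (hadj _ _).2 ⟨hne, j₁, hj₁, hv₁, ?_⟩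
      exact ⟨le_trans (hamono.monotoneOn hj₁ hj₂ hle) hv₂.1, le_trans hle₂ hxj₁.2⟩
    · refine (hadj _ _).2 ⟨hne, j₂, hj₂, ?_, hv₂⟩
      exact ⟨le_trans (hamono.monotoneOn hj₂ hj₁ hle) hv₁.1, le_trans hle₁ hxj₂.2⟩
  · -- part 2
    have key2 : ∀ v, G.Adj (b i + 1) v → v ∉ Set.Icc (a (i + 1)) (b i) →
        ∃ j, j ∈ Set.Icc 1 t ∧ (b i + 1) ∈ Set.Icc (a j) (b j) ∧
          v ∈ Set.Icc (a j) (b j) ∧ b i + 1 ≤ v := by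
      intro v hv hnot
      obtain ⟨hne, j, hj, hyj, hvj⟩ := (hadj _ _).1 hv
      have hji : i + 1 ≤ j := by
        by_contra h
        have h1 : b j ≤ b i := hbmono.monotoneOn hj hiIcc (by omega)
        have := hyj.2
        omega
      have hav : a (i + 1) ≤ v := le_trans (hamono.monotoneOn hi1Icc hj hji) hvj.1
      have hvgt : b i + 1 ≤ v := by
        simp only [Set.mem_Icc, not_and, not_le] at hnot
        omega
      exact ⟨j, hj, hyj, hvj, hvgt⟩
    intro v₁ v₂ hne h1' h2' hn1 hn2
    obtain ⟨j₁, hj₁, hyj₁, hv₁, hge₁⟩ := key2 v₁ h1' hn1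
    obtain ⟨j₂, hj₂, hyj₂, hv₂, hge₂⟩ := key2 v₂ h2' hn2
    rcases le_total j₁ j₂ with hle | hle
    · refine (hadj _ _).2 ⟨hne, j₂, hj₂, ?_, hv₂⟩
      exact ⟨le_trans hyj₂.1 hge₁, le_trans hv₁.2 (hbmono.monotoneOn hj₁ hj₂ hle)⟩
    · refine (hadj _ _).2 ⟨hne, j₁, hj₁, hv₁, ?_⟩
      exact ⟨le_trans hyj₁.1 hge₂, le_trans hv₂.2 (hbmono.monotoneOn hj₂ hj₁ hle)⟩
end

section
/- Let G be a path graph on [n] and T a cut set of G (a subset of {2,…,n−1} with no two consecutive elements). Let in(J) = (x_{1,i}x_{2,i+1} : 1 ≤ i ≤ n−1) and let in(P_T) be the initial ideal of the associated prime P_T(K_2,G), which is generated by {x_{1,j}, x_{2,j} : j ∈ T} together with {x_{1,u}x_{2,v} : u < v in the same connected component of G \ T}. Then every monomial h in (in(J) : in(P_T)) \ in(J) is divisible, for each v ∈ T, by x_{1,v−1}x_{2,v+1}, and for each vertex u that is an internal vertex of G \ T adjacent (in the component of G \ T containing it) to vertices on both sides, by x_{1,u} or x_{2,u}; consequently deg(h)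 ≥ 2|T| + Σ_c (|c| − 2), where the sum runs over the connected components c of G \ T with at least 3 vertices counting their internal vertices. -/
open MvPolynomial

section PathColonAux

variable {K : Type*} [Field K]

lemma X_mul_X_eq (a b : ℕ × ℕ) :
    (X a * X b : MvPolynomial (ℕ × ℕ) K)
      = monomial (Finsupp.single a 1 + Finsupp.single b 1) 1 := by
  rw [X, X, monomial_mul, one_mul]

lemma single_add_single_le {a b : ℕ × ℕ} (hab : a ≠ b) (d : (ℕ × ℕ) →₀ ℕ) :
    Finsupp.single a 1 + Finsupp.single b 1 ≤ d ↔ 1 ≤ d a ∧ 1 ≤ d b := by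
  rw [Finsupp.le_def]
  constructor
  · intro h
    constructor
    · simpa [Finsupp.single_apply, Ne.symm hab] using h a
    · simpa [Finsupp.single_apply, hab] using h b
  · rintro ⟨ha, hb⟩ s
    rcases eq_or_ne s a with rfl | hsa
    · simpa [Finsupp.single_apply, hab, Ne.symm hab] using ha
    rcases eq_or_ne s b with rfl | hsb
    · simpa [Finsupp.single_apply, hab, Ne.symm hab] using hb
    · simp [Finsupp.single_apply, Ne.symm hsa, Ne.symm hsb]

lemma mem_inJ_iff (n : ℕ) (d : (ℕ × ℕ) →₀ ℕ) :
    (monomial d (1 : K)) ∈ Ideal.span {f : MvPolynomial (ℕ × ℕ) K |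
        ∃ i : ℕ, 1 ≤ i ∧ i + 1 ≤ n ∧ f = X (1, i) * X (2, i + 1)} ↔
    ∃ i : ℕ, 1 ≤ i ∧ i + 1 ≤ n ∧ 1 ≤ d (1, i) ∧ 1 ≤ d (2, i + 1) := by
  classical
  have hset : {f : MvPolynomial (ℕ × ℕ) K |
        ∃ i : ℕ, 1 ≤ i ∧ i + 1 ≤ n ∧ f = X (1, i) * X (2, i + 1)}
      = (fun m => monomial m (1 : K)) ''
        {m | ∃ i : ℕ, 1 ≤ i ∧ i + 1 ≤ n ∧
          m = Finsupp.single ((1 : ℕ), i) 1 + Finsupp.single ((2 : ℕ), i + 1) 1} := by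
    ext f
    simp only [Set.mem_setOf_eq, Set.mem_image]
    constructor
    · rintro ⟨i, h1, h2, rfl⟩
      exact ⟨_, ⟨i, h1, h2, rfl⟩, (X_mul_X_eq _ _).symm⟩
    · rintro ⟨m, ⟨i, h1, h2, rfl⟩, rfl⟩
      exact ⟨i, h1, h2, (X_mul_X_eq _ _).symm⟩
  rw [hset, mem_ideal_span_monomial_image, support_monomial, if_neg one_ne_zero]
  constructor
  · intro h
    obtain ⟨m, ⟨i, h1, h2, rfl⟩, hle⟩ := h d (Finset.mem_singleton_self d)
    obtain ⟨ha, hb⟩ := (single_add_single_le (by simp) d).mp hle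
    exact ⟨i, h1, h2, ha, hb⟩
  · rintro ⟨i, h1, h2, ha, hb⟩ xi hxi
    rw [Finset.mem_singleton] at hxi; subst hxi
    exact ⟨_, ⟨i, h1, h2, rfl⟩, (single_add_single_le (by simp) xi).mpr ⟨ha, hb⟩⟩

end PathColonAux

/-- Lemma 6.4: divisibility constraints and degree bound for monomials in
`(in(J) : in(P_T)) \ in(J)`, where `in(J)` is the initial ideal of the binomial edge
ideal of the path `P_n` and `in(P_T)` the initial ideal of the associated prime `P_T`. -/
theorem initial_colon_monomial_divisibility_and_degree
    (K : Type*) [Field K] (n : ℕ) (hn : 2 ≤ n)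
    (T : Finset ℕ) (hTsub : T ⊆ Finset.Icc 2 (n - 1))
    (hTgap : ∀ j ∈ T, j + 1 ∉ T)
    (inJ inPT : Ideal (MvPolynomial (ℕ × ℕ) K))
    (hinJ : inJ = Ideal.span {f | ∃ i : ℕ, 1 ≤ i ∧ i + 1 ≤ n ∧ f = X (1, i) * X (2, i + 1)})
    (hinPT : inPT = Ideal.span
      ({f | ∃ j ∈ T, f = X (1, j)} ∪ {f | ∃ j ∈ T, f = X (2, j)} ∪
       {f | ∃ u v : ℕ, u < v ∧ u ∈ Finset.Icc 1 n ∧ v ∈ Finset.Icc 1 n ∧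
         u ∉ T ∧ v ∉ T ∧ (∀ w ∈ T, ¬ (u < w ∧ w < v)) ∧ f = X (1, u) * X (2, v)})) :
    ∀ d : (ℕ × ℕ) →₀ ℕ,
      (monomial d (1 : K)) ∈ Submodule.colon inJ inPT →
      (monomial d (1 : K)) ∉ inJ →
      (∀ v ∈ T, (X (1, v - 1) * X (2, v + 1) : MvPolynomial (ℕ × ℕ) K) ∣ monomial d 1) ∧
      (∀ u : ℕ, 2 ≤ u → u + 1 ≤ n → u ∉ T → u - 1 ∉ T → u + 1 ∉ T →
        ((X (1, u) : MvPolynomial (ℕ × ℕ) K) ∣ monomial d 1 ∨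
         (X (2, u) : MvPolynomial (ℕ × ℕ) K) ∣ monomial d 1)) ∧
      2 * T.card +
          ((Finset.Icc 2 (n - 1)).filter
            (fun u => u ∉ T ∧ u - 1 ∉ T ∧ u + 1 ∉ T)).card ≤
        d.sum fun _ e => e := by
  classical
  intro d hcolon hnotJ
  subst hinJ hinPT
  -- not in inJ, pointwise form
  rw [mem_inJ_iff] at hnotJ
  push_neg at hnotJ
  -- generic consequence of colon membership
  have hmul : ∀ g ∈ ({f | ∃ j ∈ T, f = X (1, j)} ∪ {f | ∃ j ∈ T, f = X (2, j)} ∪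
       {f | ∃ u v : ℕ, u < v ∧ u ∈ Finset.Icc 1 n ∧ v ∈ Finset.Icc 1 n ∧
         u ∉ T ∧ v ∉ T ∧ (∀ w ∈ T, ¬ (u < w ∧ w < v)) ∧ f = X (1, u) * X (2, v)} :
         Set (MvPolynomial (ℕ × ℕ) K)),
      (monomial d (1 : K)) * g ∈
        Ideal.span {f : MvPolynomial (ℕ × ℕ) K |
          ∃ i : ℕ, 1 ≤ i ∧ i + 1 ≤ n ∧ f = X (1, i) * X (2, i + 1)} := by
    intro g hg
    have := Submodule.mem_colon.mp hcolon g (Ideal.subset_span hg)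
    simpa [smul_eq_mul] using this
  -- key fact for v ∈ T
  have hT : ∀ v ∈ T, 1 ≤ d (1, v - 1) ∧ 1 ≤ d (2, v + 1) := by
    intro v hv
    have hv2 : 2 ≤ v := (Finset.mem_Icc.mp (hTsub hv)).1
    have hvn : v ≤ n - 1 := (Finset.mem_Icc.mp (hTsub hv)).2
    constructor
    · -- use generator X (2, v)
      have hg : (X ((2 : ℕ), v) : MvPolynomial (ℕ × ℕ) K) ∈
          ({f | ∃ j ∈ T, f = X (1, j)} ∪ {f | ∃ j ∈ T, f = X (2, j)} ∪
           {f | ∃ u v : ℕ, u < v ∧ u ∈ Finset.Icc 1 n ∧ v ∈ Finset.Icc 1 n ∧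
             u ∉ T ∧ v ∉ T ∧ (∀ w ∈ T, ¬ (u < w ∧ w < v)) ∧ f = X (1, u) * X (2, v)} :
             Set (MvPolynomial (ℕ × ℕ) K)) :=
        Or.inl (Or.inr ⟨v, hv, rfl⟩)
      have hm := hmul _ hg
      rw [X, monomial_mul, mul_one, mem_inJ_iff] at hm
      obtain ⟨i, h1, h2, ha, hb⟩ := hm
      rcases eq_or_ne (i + 1) v with hiv | hiv
      · have : i = v - 1 := by omega
        subst this
        rw [Finsupp.add_apply, Finsupp.single_apply, if_neg (by simp only [ne_eq, Prod.mk.injEq, not_and]; omega)] at ha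
        simpa using ha
      · exfalso
        rw [Finsupp.add_apply, Finsupp.single_apply, if_neg (by simp only [ne_eq, Prod.mk.injEq, not_and]; omega)] at ha
        rw [Finsupp.add_apply, Finsupp.single_apply,
          if_neg (by simp only [ne_eq, Prod.mk.injEq, not_and]; omega)] at hb
        have ha' : 1 ≤ d (1, i) := by simpa using ha
        have hb' : 1 ≤ d (2, i + 1) := by simpa using hb
        have := hnotJ i h1 h2 ha'
        omega
    · -- use generator X (1, v)
      have hg : (X ((1 : ℕ), v) : MvPolynomial (ℕ × ℕ) K) ∈
          ({f | ∃ j ∈ T, f = X (1, j)} ∪ {f | ∃ j ∈ T, f = X (2, j)} ∪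
           {f | ∃ u v : ℕ, u < v ∧ u ∈ Finset.Icc 1 n ∧ v ∈ Finset.Icc 1 n ∧
             u ∉ T ∧ v ∉ T ∧ (∀ w ∈ T, ¬ (u < w ∧ w < v)) ∧ f = X (1, u) * X (2, v)} :
             Set (MvPolynomial (ℕ × ℕ) K)) :=
        Or.inl (Or.inl ⟨v, hv, rfl⟩)
      have hm := hmul _ hg
      rw [X, monomial_mul, mul_one, mem_inJ_iff] at hm
      obtain ⟨i, h1, h2, ha, hb⟩ := hm
      rcases eq_or_ne i v with hiv | hiv
      · subst hiv
        rw [Finsupp.add_apply, Finsupp.single_apply, if_neg (by simp only [ne_eq, Prod.mk.injEq, not_and]; omega)] at hb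
        simpa using hb
      · exfalso
        rw [Finsupp.add_apply, Finsupp.single_apply,
          if_neg (by simp only [ne_eq, Prod.mk.injEq, not_and]; omega)] at ha
        rw [Finsupp.add_apply, Finsupp.single_apply, if_neg (by simp only [ne_eq, Prod.mk.injEq, not_and]; omega)] at hb
        have ha' : 1 ≤ d (1, i) := by simpa using ha
        have hb' : 1 ≤ d (2, i + 1) := by simpa using hb
        have := hnotJ i h1 h2 ha'
        omega
  -- key fact for internal vertices
  have hI : ∀ u : ℕ, 2 ≤ u → u + 1 ≤ n → u ∉ T → u - 1 ∉ T → u + 1 ∉ T →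
      (1 ≤ d (1, u) ∨ 1 ≤ d (2, u)) := by
    intro u hu2 hun huT hu1T hu3T
    have hg : (X ((1 : ℕ), u - 1) * X ((2 : ℕ), u + 1) : MvPolynomial (ℕ × ℕ) K) ∈
        ({f | ∃ j ∈ T, f = X (1, j)} ∪ {f | ∃ j ∈ T, f = X (2, j)} ∪
         {f | ∃ u v : ℕ, u < v ∧ u ∈ Finset.Icc 1 n ∧ v ∈ Finset.Icc 1 n ∧
           u ∉ T ∧ v ∉ T ∧ (∀ w ∈ T, ¬ (u < w ∧ w < v)) ∧ f = X (1, u) * X (2, v)} :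
           Set (MvPolynomial (ℕ × ℕ) K)) := by
      refine Or.inr ⟨u - 1, u + 1, by omega, Finset.mem_Icc.mpr ⟨by omega, by omega⟩,
        Finset.mem_Icc.mpr ⟨by omega, by omega⟩, hu1T, hu3T, ?_, rfl⟩
      intro w hw hww
      have : w = u := by omega
      exact huT (this ▸ hw)
    have hm := hmul _ hg
    rw [X_mul_X_eq, monomial_mul, mul_one, mem_inJ_iff] at hm
    obtain ⟨i, h1, h2, ha, hb⟩ := hm
    rcases eq_or_ne i (u - 1) with hiu1 | hiu1
    · -- then d (2, u) ≥ 1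
      right
      subst hiu1
      have hi1 : u - 1 + 1 = u := by omega
      rw [Finsupp.add_apply, Finsupp.add_apply, Finsupp.single_apply,
        if_neg (by simp only [ne_eq, Prod.mk.injEq, not_and]; omega), Finsupp.single_apply,
        if_neg (by simp only [ne_eq, Prod.mk.injEq, not_and]; omega), hi1] at hb
      simpa using hb
    · rcases eq_or_ne i u with hiu | hiu
      · left
        subst hiu
        rw [Finsupp.add_apply, Finsupp.add_apply, Finsupp.single_apply,
          if_neg (by simp only [ne_eq, Prod.mk.injEq, not_and]; omega), Finsupp.single_apply,
          if_neg (by simp only [ne_eq, Prod.mk.injEq, not_and]; omega)] at ha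
        simpa using ha
      · exfalso
        rw [Finsupp.add_apply, Finsupp.add_apply, Finsupp.single_apply,
          if_neg (by simp only [ne_eq, Prod.mk.injEq, not_and]; omega), Finsupp.single_apply,
          if_neg (by simp only [ne_eq, Prod.mk.injEq, not_and]; omega)] at ha
        rw [Finsupp.add_apply, Finsupp.add_apply, Finsupp.single_apply,
          if_neg (by simp only [ne_eq, Prod.mk.injEq, not_and]; omega), Finsupp.single_apply,
          if_neg (by simp only [ne_eq, Prod.mk.injEq, not_and]; omega)] at hb
        have ha' : 1 ≤ d (1, i) := by simpa using ha
        have hb' : 1 ≤ d (2, i + 1) := by simpa using hb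
        have := hnotJ i h1 h2 ha'
        omega
  refine ⟨?_, ?_, ?_⟩
  · intro v hv
    obtain ⟨ha, hb⟩ := hT v hv
    rw [X_mul_X_eq, monomial_one_dvd_monomial_one]
    exact (single_add_single_le (by simp) d).mpr ⟨ha, hb⟩
  · intro u hu2 hun huT hu1T hu3T
    rcases hI u hu2 hun huT hu1T hu3T with h | h
    · exact Or.inl (X_dvd_monomial.mpr (Or.inr (by omega)))
    · exact Or.inr (X_dvd_monomial.mpr (Or.inr (by omega)))
  · -- degree bound
    set I : Finset ℕ := (Finset.Icc 2 (n - 1)).filter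
        (fun u => u ∉ T ∧ u - 1 ∉ T ∧ u + 1 ∉ T) with hIdef
    set A : Finset (ℕ × ℕ) := T.image (fun v => ((1 : ℕ), v - 1)) with hA
    set B : Finset (ℕ × ℕ) := T.image (fun v => ((2 : ℕ), v + 1)) with hB
    set C : Finset (ℕ × ℕ) := I.image (fun u => (if 1 ≤ d (1, u) then 1 else 2, u)) with hC
    have hIint : ∀ u ∈ I, 2 ≤ u ∧ u + 1 ≤ n ∧ u ∉ T ∧ u - 1 ∉ T ∧ u + 1 ∉ T := by
      intro u hu
      rw [hIdef, Finset.mem_filter, Finset.mem_Icc] at hu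
      exact ⟨hu.1.1, by omega, hu.2.1, hu.2.2.1, hu.2.2.2⟩
    have hSpos : ∀ s ∈ A ∪ B ∪ C, 1 ≤ d s := by
      intro s hs
      rcases Finset.mem_union.mp hs with hs | hs
      · rcases Finset.mem_union.mp hs with hs | hs
        · obtain ⟨v, hv, rfl⟩ := Finset.mem_image.mp hs
          exact (hT v hv).1
        · obtain ⟨v, hv, rfl⟩ := Finset.mem_image.mp hs
          exact (hT v hv).2
      · obtain ⟨u, hu, rfl⟩ := Finset.mem_image.mp hs
        obtain ⟨h2, hn', h3, h4, h5⟩ := hIint u hu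
        by_cases h' : 1 ≤ d (1, u)
        · rw [if_pos h']
          exact h'
        · rw [if_neg h']
          exact (hI u h2 hn' h3 h4 h5).resolve_left h'
    have hsub : A ∪ B ∪ C ⊆ d.support := by
      intro s hs
      rw [Finsupp.mem_support_iff]
      have := hSpos s hs
      omega
    have hdisjAB : Disjoint A B := by
      rw [Finset.disjoint_left]
      rintro s hs hs'
      obtain ⟨v, hv, rfl⟩ := Finset.mem_image.mp hs
      obtain ⟨v', hv', h⟩ := Finset.mem_image.mp hs'
      exact absurd (congrArg Prod.fst h) (by simp)
    have hdisjC : Disjoint (A ∪ B) C := by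
      rw [Finset.disjoint_left]
      rintro s hs hs'
      obtain ⟨u, hu, rfl⟩ := Finset.mem_image.mp hs'
      obtain ⟨h2, hn', h3, h4, h5⟩ := hIint u hu
      rcases Finset.mem_union.mp hs with hs | hs
      · obtain ⟨v, hv, h⟩ := Finset.mem_image.mp hs
        have hv2 : 2 ≤ v := (Finset.mem_Icc.mp (hTsub hv)).1
        have : v - 1 = u := congrArg Prod.snd h
        have : v = u + 1 := by omega
        exact h5 (this ▸ hv)
      · obtain ⟨v, hv, h⟩ := Finset.mem_image.mp hs
        have : v + 1 = u := congrArg Prod.snd h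
        have : v = u - 1 := by omega
        exact h4 (this ▸ hv)
    have hcardA : A.card = T.card := by
      rw [hA]
      apply Finset.card_image_of_injOn
      intro v hv v' hv' h
      have hv2 : 2 ≤ v := (Finset.mem_Icc.mp (hTsub hv)).1
      have hv2' : 2 ≤ v' := (Finset.mem_Icc.mp (hTsub hv')).1
      have := congrArg Prod.snd h
      simp only at this
      omega
    have hcardB : B.card = T.card := by
      rw [hB]
      apply Finset.card_image_of_injOn
      intro v hv v' hv' h
      have := congrArg Prod.snd h
      simp only at this
      omega
    have hcardC : C.card = I.card := by
      rw [hC]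
      apply Finset.card_image_of_injOn
      intro u hu u' hu' h
      exact congrArg Prod.snd h
    have hcard : (A ∪ B ∪ C).card = 2 * T.card + I.card := by
      rw [Finset.card_union_of_disjoint hdisjC, Finset.card_union_of_disjoint hdisjAB,
        hcardA, hcardB, hcardC]
      ring
    calc 2 * T.card + I.card = (A ∪ B ∪ C).card := hcard.symm
      _ = ∑ s ∈ A ∪ B ∪ C, 1 := by simp
      _ ≤ ∑ s ∈ A ∪ B ∪ C, d s := Finset.sum_le_sum hSpos
      _ ≤ ∑ s ∈ d.support, d s := Finset.sum_le_sum_of_subset hsub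
      _ = d.sum fun _ e => e := rfl
end
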